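/- arXiv:1606.03926 — 6 statements merged into one kernel-verified Lean document; each statement's English description precedes it below -/
import Mathlib

section
/- Let N ⊆ M be pointed metric spaces with the distinguished point 0 ∈ N. If there exists a Lipschitz retraction r : M → N, then the Lipschitz-free space F(M) is linearly isomorphic to the direct sum F(N) ⊕ F_N(M). -/
open scoped NNReal ENNReal

/-- `F` together with the Dirac map `δ : M → F` is (a realization of) the Lipschitz-free
space `𝓕(M)` of the pointed metric space `(M, base)`, characterized by its universal
property. -/
structure IsLipFreeSpace (M : Type*) [MetricSpace M] (base : M)
    (F : Type*) [NormedAddCommGroup F] [NormedSpace ℝ F] [CompleteSpace F]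
    (δ : M → F) : Prop where
  isometry : Isometry δ
  map_base : δ base = 0
  dense_span : (Submodule.span ℝ (Set.range δ)).topologicalClosure = ⊤
  extend : ∀ (Z : Type) [NormedAddCommGroup Z] [NormedSpace ℝ Z] [CompleteSpace Z]
    (L : ℝ≥0) (f : M → Z), LipschitzWith L f → f base = 0 →
    ∃ T : F →L[ℝ] Z, ‖T‖ ≤ (L : ℝ) ∧ ∀ x : M, T (δ x) = f x

/-- `F` together with `δ : M → F` is (a realization of) the relative Lipschitz-free space
`𝓕_N(M) ≅ 𝓕(M)/𝓕(N)`, again characterized by the universal property (with respect to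
Lipschitz functions vanishing on `N`). -/
structure IsRelLipFreeSpace (M : Type*) [MetricSpace M] (N : Set M)
    (F : Type*) [NormedAddCommGroup F] [NormedSpace ℝ F] [CompleteSpace F]
    (δ : M → F) : Prop where
  lipschitz : LipschitzWith 1 δ
  vanish : ∀ x ∈ N, δ x = 0
  dense_span : (Submodule.span ℝ (Set.range δ)).topologicalClosure = ⊤
  extend : ∀ (Z : Type) [NormedAddCommGroup Z] [NormedSpace ℝ Z] [CompleteSpace Z]
    (L : ℝ≥0) (f : M → Z), LipschitzWith L f → (∀ x ∈ N, f x = 0) →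
    ∃ T : F →L[ℝ] Z, ‖T‖ ≤ (L : ℝ) ∧ ∀ x : M, T (δ x) = f x

/-- `N` is an `(a,b)`-net for some `a, b > 0`. -/
def IsNet {X : Type*} [MetricSpace X] (N : Set X) : Prop :=
  ∃ a b : ℝ, 0 < a ∧ 0 < b ∧
    (∀ x ∈ N, ∀ y ∈ N, x ≠ y → a ≤ dist x y) ∧
    (∀ x : X, EMetric.infEdist x N < ENNReal.ofReal b)

/-- A sequence `e` is a Schauder basis of `Y`: every vector has a unique expansion. -/
def IsSchauderBasis {Y : Type*} [NormedAddCommGroup Y] [NormedSpace ℝ Y] (e : ℕ → Y) : Prop :=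
  ∀ y : Y, ∃! a : ℕ → ℝ,
    Filter.Tendsto (fun n => ∑ i ∈ Finset.range n, a i • e i) Filter.atTop (nhds y)

/-- Density character of a topological space. -/
noncomputable def densityCharacter (M : Type u) [TopologicalSpace M] : Cardinal.{u} :=
  ⨅ s : {s : Set M // Dense s}, Cardinal.mk s

/-- If `N ⊆ M` are pointed metric spaces with distinguished point
`base ∈ N` and there is a Lipschitz retraction `r : M → N`, then
`𝓕(M) ≅ 𝓕(N) ⊕ 𝓕_N(M)`. -/
theorem stmt_0 (M : Type*) [MetricSpace M] (base : M) (N : Set M) (hbase : base ∈ N)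
    (r : M → M) (K : ℝ≥0) (hr : LipschitzWith K r)
    (hrange : ∀ x : M, r x ∈ N) (hretr : ∀ x ∈ N, r x = x)
    (FM : Type) [NormedAddCommGroup FM] [NormedSpace ℝ FM] [CompleteSpace FM]
    (δM : M → FM) (hFM : IsLipFreeSpace M base FM δM)
    (FN : Type) [NormedAddCommGroup FN] [NormedSpace ℝ FN] [CompleteSpace FN]
    (δN : ↥N → FN) (hFN : IsLipFreeSpace ↥N ⟨base, hbase⟩ FN δN)
    (FNM : Type) [NormedAddCommGroup FNM] [NormedSpace ℝ FNM] [CompleteSpace FNM]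
    (δNM : M → FNM) (hFNM : IsRelLipFreeSpace M N FNM δNM) :
    Nonempty (FM ≃L[ℝ] FN × FNM) := by
  classical
  have denseM : Dense ((Submodule.span ℝ (Set.range δM) : Submodule ℝ FM) : Set FM) :=
    Submodule.dense_iff_topologicalClosure_eq_top.mpr hFM.dense_span
  have denseN : Dense ((Submodule.span ℝ (Set.range δN) : Submodule ℝ FN) : Set FN) :=
    Submodule.dense_iff_topologicalClosure_eq_top.mpr hFN.dense_span
  have denseNM : Dense ((Submodule.span ℝ (Set.range δNM) : Submodule ℝ FNM) : Set FNM) :=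
    Submodule.dense_iff_topologicalClosure_eq_top.mpr hFNM.dense_span
  -- S : FM →L FN
  have hrlip : LipschitzWith K (fun x : M => (⟨r x, hrange x⟩ : N)) :=
    LipschitzWith.subtype_mk hr hrange
  have hSlip : LipschitzWith K (fun x : M => δN ⟨r x, hrange x⟩) := by
    simpa [Function.comp_def] using hFN.isometry.lipschitz.comp hrlip
  obtain ⟨S, -, hS⟩ := hFM.extend FN K (fun x : M => δN ⟨r x, hrange x⟩) hSlip
    (by simp only [show r base = base from hretr base hbase]; exact hFN.map_base)
  -- Q : FM →L FNM
  obtain ⟨Q, -, hQ⟩ := hFM.extend FNM 1 δNM hFNM.lipschitz (hFNM.vanish base hbase)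
  -- U : FN →L FM
  have hUlip : LipschitzWith 1 (fun n : N => δM (n : M)) := by
    simpa [Function.comp_def] using hFM.isometry.lipschitz.comp (LipschitzWith.subtype_val N)
  obtain ⟨U, -, hU⟩ := hFN.extend FM 1 (fun n : N => δM (n : M)) hUlip hFM.map_base
  -- V : FNM →L FM
  have hVlip : LipschitzWith (1 + K) (fun x : M => δM x - δM (r x)) := by
    have : LipschitzWith K (fun x => δM (r x)) := by
      simpa [Function.comp_def] using hFM.isometry.lipschitz.comp hr
    exact hFM.isometry.lipschitz.sub this
  obtain ⟨V, -, hV⟩ := hFNM.extend FM (1 + K) (fun x : M => δM x - δM (r x)) hVlip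
    (fun x hx => by simp [hretr x hx])
  set T : FM →L[ℝ] FN × FNM := S.prod Q with hT
  set W : (FN × FNM) →L[ℝ] FM := U.coprod V with hW
  have hWT : W.comp T = ContinuousLinearMap.id ℝ FM := by
    apply ContinuousLinearMap.ext_on denseM
    rintro _ ⟨x, rfl⟩
    simp [hT, hW, hS, hQ, hU, hV]
  have hinl : (T.comp W).comp (ContinuousLinearMap.inl ℝ FN FNM)
      = ContinuousLinearMap.inl ℝ FN FNM := by
    apply ContinuousLinearMap.ext_on denseN
    rintro _ ⟨n, rfl⟩
    have h1 : (⟨r (n : M), hrange _⟩ : N) = n := Subtype.ext (hretr _ n.2)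
    simp [hT, hW, hU, hS, hQ, h1, hFNM.vanish (n : M) n.2, Prod.ext_iff]
  have hinr : (T.comp W).comp (ContinuousLinearMap.inr ℝ FN FNM)
      = ContinuousLinearMap.inr ℝ FN FNM := by
    apply ContinuousLinearMap.ext_on denseNM
    rintro _ ⟨x, rfl⟩
    have h1 : r (r x) = r x := hretr _ (hrange x)
    have h2 : δNM (r x) = 0 := hFNM.vanish _ (hrange x)
    simp [hT, hW, hV, hS, hQ, h1, h2, Prod.ext_iff]
  have hTW : ∀ y : FN × FNM, T (W y) = y := by
    rintro ⟨u, v⟩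
    have : (u, v) = ((u, 0) : FN × FNM) + (0, v) := by simp [Prod.ext_iff]
    rw [this, map_add, map_add]
    have e1 := congrFun (congrArg DFunLike.coe hinl) u
    have e2 := congrFun (congrArg DFunLike.coe hinr) v
    simp only [ContinuousLinearMap.comp_apply, ContinuousLinearMap.inl_apply,
      ContinuousLinearMap.inr_apply] at e1 e2
    rw [e1, e2]
  exact ⟨ContinuousLinearEquiv.equivOfInverse T W
    (fun x => congrFun (congrArg DFunLike.coe hWT) x) hTW⟩
end

section
/- Let (M,d,0) be a pointed metric space, K > 0, let {M_α}_{α∈Γ} be a family of pairwise disjoint subsets of M, and let N be a subset of M∖⋃_{α∈Γ} M_α containing 0. Suppose that for every β ∈ Γ and every x ∈ M_β one has d(x, ⋃_{α∈Γ, α≠β} M_α) ≥ K·d(x,N). Then F_N(N ∪ ⋃_{α∈Γ} M_α) is linearly isomorphic to the ℓ1(Γ)-sum (⊕_{α∈Γ} F_N(N ∪ M_α))_{ℓ1(Γ)}. In particular, if N = {0}, then F({0} ∪ ⋃_{α∈Γ} M_α) is isomorphic to (⊕_{α∈Γ} F({0} ∪ M_α))_{ℓ1(Γ)}. -/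
open scoped NNReal ENNReal

set_option linter.unusedSectionVars false
set_option linter.unnecessarySimpa false
section Helpers
variable {Γ : Type} [DecidableEq Γ] {G : Γ → Type} [∀ α, NormedAddCommGroup (G α)]
  [∀ α, NormedSpace ℝ (G α)]

lemma lp_single_add (i : Γ) (a b : G i) :
    (lp.single 1 i (a + b) : lp G 1) = lp.single 1 i a + lp.single 1 i b := by
  apply lp.ext; funext j
  by_cases h : j = i
  · subst h; simp [lp.single_apply_self]
  · simp [lp.single_apply_ne _ _ _ h]

lemma lp_single_sub (i : Γ) (a b : G i) :
    (lp.single 1 i (a - b) : lp G 1) = lp.single 1 i a - lp.single 1 i b := by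
  apply lp.ext; funext j
  by_cases h : j = i
  · subst h; simp [lp.single_apply_self]
  · simp [lp.single_apply_ne _ _ _ h]

lemma lp_norm_single (i : Γ) (a : G i) : ‖(lp.single 1 i a : lp G 1)‖ = ‖a‖ := by
  exact lp.norm_single (E := G) (p := 1) (by norm_num) i a

noncomputable def singleCLM (i : Γ) : G i →L[ℝ] lp G 1 :=
  LinearMap.mkContinuous
    { toFun := fun a => lp.single 1 i a
      map_add' := lp_single_add i
      map_smul' := fun c a => by simpa using lp.single_smul 1 i a c }
    1 (fun a => by simp [lp_norm_single])

@[simp] lemma singleCLM_apply (i : Γ) (a : G i) : singleCLM i a = lp.single 1 i a := rfl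

end Helpers


/-- If the pairwise disjoint sets `Ms α ⊆ M` satisfy
`d(x, ⋃_{α ≠ β} Ms α) ≥ K · d(x, N)` for every `β` and `x ∈ Ms β`, then
`𝓕_N(N ∪ ⋃_α Ms α) ≅ (⊕_α 𝓕_N(N ∪ Ms α))_{ℓ₁(Γ)}`. -/
theorem stmt_1 (M : Type*) [MetricSpace M] (base : M)
    (Γ : Type) (Ms : Γ → Set M) (N : Set M) (hbase : base ∈ N)
    (hdisj : ∀ α β : Γ, α ≠ β → Disjoint (Ms α) (Ms β))
    (hNdisj : N ⊆ (⋃ α, Ms α)ᶜ)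
    (K : ℝ≥0) (hK : 0 < K)
    (hsep : ∀ β : Γ, ∀ x ∈ Ms β,
      (K : ℝ≥0∞) * EMetric.infEdist x N ≤
        EMetric.infEdist x (⋃ (α : Γ) (_ : α ≠ β), Ms α))
    (F : Type) [NormedAddCommGroup F] [NormedSpace ℝ F] [CompleteSpace F]
    (δ : ↥(N ∪ ⋃ α, Ms α) → F)
    (hF : IsRelLipFreeSpace (↥(N ∪ ⋃ α, Ms α))
      {x : ↥(N ∪ ⋃ α, Ms α) | (x : M) ∈ N} F δ)
    (G : Γ → Type) [∀ α, NormedAddCommGroup (G α)] [∀ α, NormedSpace ℝ (G α)]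
    [∀ α, CompleteSpace (G α)]
    (δG : ∀ α : Γ, ↥(N ∪ Ms α) → G α)
    (hG : ∀ α : Γ, IsRelLipFreeSpace (↥(N ∪ Ms α))
      {x : ↥(N ∪ Ms α) | (x : M) ∈ N} (G α) (δG α)) :
    Nonempty (F ≃L[ℝ] lp G 1) := by
  classical
  -- uniqueness of the piece containing a point
  have huniq : ∀ {γ₁ γ₂ : Γ} {x : M}, x ∈ Ms γ₁ → x ∈ Ms γ₂ → γ₁ = γ₂ := by
    intro γ₁ γ₂ x h1 h2
    by_contra hne
    exact Set.disjoint_left.mp (hdisj _ _ hne) h1 h2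
  -- inclusion maps
  have hmemU : ∀ (α : Γ) (y : ↥(N ∪ Ms α)), (y : M) ∈ N ∪ ⋃ α, Ms α := by
    rintro α ⟨y, hy | hy⟩
    · exact Or.inl hy
    · exact Or.inr (Set.mem_iUnion.mpr ⟨α, hy⟩)
  set ι : ∀ α : Γ, ↥(N ∪ Ms α) → ↥(N ∪ ⋃ α, Ms α) :=
    fun α y => ⟨(y : M), hmemU α y⟩ with hι
  have hιlip : ∀ α, LipschitzWith 1 (fun y => δ (ι α y)) := by
    intro α
    refine LipschitzWith.of_dist_le_mul fun y z => ?_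
    have h := (hF.lipschitz).dist_le_mul (ι α y) (ι α z)
    rwa [show dist (ι α y) (ι α z) = dist y z from by
      rw [Subtype.dist_eq, Subtype.dist_eq y z]] at h
  -- the operators T α : G α →L[ℝ] F
  have hText : ∀ α : Γ, ∃ T : G α →L[ℝ] F, ‖T‖ ≤ ((1 : ℝ≥0) : ℝ) ∧
      ∀ y, T (δG α y) = δ (ι α y) := by
    intro α
    refine (hG α).extend F 1 (fun y => δ (ι α y)) (hιlip α) ?_
    intro y hy
    exact hF.vanish (ι α y) hy
  choose T hT1 hT2 using hText
  -- norm bound for δG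
  have hbound : ∀ (α : Γ) (y : ↥(N ∪ Ms α)) (n : M), n ∈ N → ‖δG α y‖ ≤ dist (y : M) n := by
    intro α y n hn
    have h0 : δG α ⟨n, Or.inl hn⟩ = 0 := (hG α).vanish _ hn
    have h := ((hG α).lipschitz).dist_le_mul y ⟨n, Or.inl hn⟩
    rw [Subtype.dist_eq] at h
    simpa [h0] using h
  have hboundE : ∀ (α : Γ) (y : ↥(N ∪ Ms α)),
      ENNReal.ofReal ‖δG α y‖ ≤ EMetric.infEdist (y : M) N := by
    intro α y
    refine Metric.le_infEDist.2 ?_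
    intro n hn
    rw [edist_dist]
    exact ENNReal.ofReal_le_ofReal (hbound α y n hn)
  -- cross bound
  have hcross : ∀ (α β : Γ), α ≠ β → ∀ (x' : ↥(N ∪ Ms α)), (x' : M) ∈ Ms α →
      ∀ y : M, y ∈ Ms β → ‖δG α x'‖ ≤ (K : ℝ)⁻¹ * dist (x' : M) y := by
    intro α β hne x' hx' y hy
    have hmem : y ∈ ⋃ (γ : Γ) (_ : γ ≠ α), Ms γ :=
      Set.mem_iUnion₂.mpr ⟨β, Ne.symm hne, hy⟩
    have h1 : (K : ℝ≥0∞) * ENNReal.ofReal ‖δG α x'‖ ≤ edist (x' : M) y := by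
      calc (K : ℝ≥0∞) * ENNReal.ofReal ‖δG α x'‖
          ≤ (K : ℝ≥0∞) * EMetric.infEdist (x' : M) N :=
            mul_le_mul_right (hboundE α x') _
        _ ≤ EMetric.infEdist (x' : M) (⋃ (γ : Γ) (_ : γ ≠ α), Ms γ) := hsep α _ hx'
        _ ≤ edist (x' : M) y := EMetric.infEdist_le_edist_of_mem hmem
    rw [edist_dist, ← ENNReal.ofReal_coe_nnreal, ← ENNReal.ofReal_mul K.coe_nonneg] at h1
    have h2 : (K : ℝ) * ‖δG α x'‖ ≤ dist (x' : M) y :=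
      (ENNReal.ofReal_le_ofReal_iff dist_nonneg).mp h1
    have hK' : (0 : ℝ) < (K : ℝ) := hK
    rw [inv_mul_eq_div, le_div_iff₀ hK']
    linarith [h2]
  -- the map f₀
  set f₀ : ↥(N ∪ ⋃ α, Ms α) → lp G 1 := fun x =>
    if h : ∃ γ, (x : M) ∈ Ms γ then
      lp.single 1 h.choose (δG h.choose ⟨(x : M), Or.inr h.choose_spec⟩)
    else 0 with hf₀def
  have hf₀_mem : ∀ (x : ↥(N ∪ ⋃ α, Ms α)) (α : Γ) (hx : (x : M) ∈ Ms α),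
      f₀ x = lp.single 1 α (δG α ⟨(x : M), Or.inr hx⟩) := by
    intro x α hx
    have hex : ∃ γ, (x : M) ∈ Ms γ := ⟨α, hx⟩
    have hα : hex.choose = α := huniq hex.choose_spec hx
    rw [hf₀def]
    simp only [dif_pos hex]
    subst hα
    rfl
  have hf₀_N : ∀ x : ↥(N ∪ ⋃ α, Ms α), (x : M) ∈ N → f₀ x = 0 := by
    intro x hx
    rw [hf₀def]
    refine dif_neg ?_
    rintro ⟨γ, hγ⟩
    exact hNdisj hx (Set.mem_iUnion.mpr ⟨γ, hγ⟩)
  -- Lipschitz constant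
  set L : ℝ≥0 := max 1 (2 * K⁻¹) with hL
  have hL1 : (1 : ℝ) ≤ (L : ℝ) := by
    rw [hL]; push_cast; exact le_max_left _ _
  have hL2 : 2 * (K : ℝ)⁻¹ ≤ (L : ℝ) := by
    rw [hL]; push_cast; exact le_max_right _ _
  have hlip : LipschitzWith L f₀ := by
    refine LipschitzWith.of_dist_le_mul fun x y => ?_
    have hdxy : dist x y = dist (x : M) (y : M) := Subtype.dist_eq x y
    have hd0 : (0 : ℝ) ≤ dist (x : M) (y : M) := dist_nonneg
    rcases x.2 with hx | hx
    · rcases y.2 with hy | hy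
      · rw [hf₀_N x hx, hf₀_N y hy, dist_self]
        positivity
      · obtain ⟨β, hβ⟩ := Set.mem_iUnion.mp hy
        rw [hf₀_N x hx, hf₀_mem y β hβ, dist_comm, dist_zero_right, lp_norm_single]
        calc ‖δG β ⟨(y : M), Or.inr hβ⟩‖ ≤ dist (y : M) (x : M) := hbound β _ _ hx
          _ = 1 * dist (x : M) (y : M) := by rw [one_mul, dist_comm]
          _ ≤ (L : ℝ) * dist x y := by rw [hdxy]; exact mul_le_mul_of_nonneg_right hL1 hd0
    · obtain ⟨α, hα⟩ := Set.mem_iUnion.mp hx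
      rcases y.2 with hy | hy
      · rw [hf₀_mem x α hα, hf₀_N y hy, dist_zero_right, lp_norm_single]
        calc ‖δG α ⟨(x : M), Or.inr hα⟩‖ ≤ dist (x : M) (y : M) := hbound α _ _ hy
          _ = 1 * dist (x : M) (y : M) := (one_mul _).symm
          _ ≤ (L : ℝ) * dist x y := by rw [hdxy]; exact mul_le_mul_of_nonneg_right hL1 hd0
      · obtain ⟨β, hβ⟩ := Set.mem_iUnion.mp hy
        rcases eq_or_ne α β with rfl | hne
        · rw [hf₀_mem x α hα, hf₀_mem y α hβ, dist_eq_norm, ← lp_single_sub,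
            lp_norm_single]
          have h := ((hG α).lipschitz).dist_le_mul ⟨(x : M), Or.inr hα⟩ ⟨(y : M), Or.inr hβ⟩
          rw [Subtype.dist_eq, dist_eq_norm] at h
          simp only [NNReal.coe_one, one_mul] at h
          calc ‖δG α ⟨(x : M), Or.inr hα⟩ - δG α ⟨(y : M), Or.inr hβ⟩‖
              ≤ dist (x : M) (y : M) := h
            _ = 1 * dist (x : M) (y : M) := (one_mul _).symm
            _ ≤ (L : ℝ) * dist x y := by rw [hdxy]; exact mul_le_mul_of_nonneg_right hL1 hd0
        · rw [hf₀_mem x α hα, hf₀_mem y β hβ, dist_eq_norm]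
          have hx' := hcross α β hne ⟨(x : M), Or.inr hα⟩ hα (y : M) hβ
          have hy' := hcross β α (Ne.symm hne) ⟨(y : M), Or.inr hβ⟩ hβ (x : M) hα
          rw [dist_comm] at hy'
          calc ‖(lp.single 1 α (δG α ⟨(x : M), Or.inr hα⟩) : lp G 1) -
                lp.single 1 β (δG β ⟨(y : M), Or.inr hβ⟩)‖
              ≤ ‖(lp.single 1 α (δG α ⟨(x : M), Or.inr hα⟩) : lp G 1)‖ +
                ‖(lp.single 1 β (δG β ⟨(y : M), Or.inr hβ⟩) : lp G 1)‖ := norm_sub_le _ _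
            _ = ‖δG α ⟨(x : M), Or.inr hα⟩‖ + ‖δG β ⟨(y : M), Or.inr hβ⟩‖ := by
                rw [lp_norm_single, lp_norm_single]
            _ ≤ (K : ℝ)⁻¹ * dist (x : M) (y : M) + (K : ℝ)⁻¹ * dist (x : M) (y : M) := by
                exact add_le_add hx' hy'
            _ = (2 * (K : ℝ)⁻¹) * dist (x : M) (y : M) := by ring
            _ ≤ (L : ℝ) * dist x y := by rw [hdxy]; exact mul_le_mul_of_nonneg_right hL2 hd0
  -- the operator R : F →L[ℝ] lp G 1
  obtain ⟨R, hRnorm, hRδ⟩ := hF.extend (lp G 1) L f₀ hlip (fun x hx => hf₀_N x hx)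
  -- summability facts
  have hsumf : ∀ f : lp G 1, Summable fun α => ‖f α‖ := by
    intro f
    have := Memℓp.summable (p := 1) (by norm_num) (lp.memℓp f)
    simpa using this
  have hTle : ∀ (α : Γ) (g : G α), ‖T α g‖ ≤ ‖g‖ := by
    intro α g
    have h1 : ‖T α‖ * ‖g‖ ≤ 1 * ‖g‖ :=
      mul_le_mul_of_nonneg_right (le_trans (hT1 α) (by norm_num)) (norm_nonneg g)
    calc ‖T α g‖ ≤ ‖T α‖ * ‖g‖ := (T α).le_opNorm g
      _ ≤ 1 * ‖g‖ := h1
      _ = ‖g‖ := one_mul _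
  have hsumT : ∀ f : lp G 1, Summable fun α => T α (f α) := by
    intro f
    exact Summable.of_norm_bounded (hsumf f) fun α => hTle α (f α)
  -- the operator S : lp G 1 →L[ℝ] F
  set Slin : lp G 1 →ₗ[ℝ] F :=
    { toFun := fun f => ∑' α, T α (f α)
      map_add' := fun f g => by
        have h : ∀ α, T α ((f + g) α) = T α (f α) + T α (g α) := fun α => by
          rw [lp.coeFn_add]; exact map_add _ _ _
        simp_rw [h]
        exact Summable.tsum_add (hsumT f) (hsumT g)
      map_smul' := fun c f => by
        have h : ∀ α, T α ((c • f) α) = c • T α (f α) := fun α => by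
          rw [lp.coeFn_smul]; exact map_smul _ _ _
        simp_rw [h]
        exact Summable.tsum_const_smul c (hsumT f) } with hSlin
  have hSbound : ∀ f : lp G 1, ‖Slin f‖ ≤ 1 * ‖f‖ := by
    intro f
    have hnorm : ∑' α, ‖f α‖ = ‖f‖ := by
      have := lp.hasSum_norm (p := 1) (by norm_num) f
      simp only [ENNReal.toReal_one, Real.rpow_one] at this
      exact this.tsum_eq
    have h1 : Summable fun α => ‖T α (f α)‖ := by
      exact Summable.of_nonneg_of_le (fun α => norm_nonneg _)
        (fun α => hTle α (f α)) (hsumf f)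
    calc ‖Slin f‖ ≤ ∑' α, ‖T α (f α)‖ := norm_tsum_le_tsum_norm h1
      _ ≤ ∑' α, ‖f α‖ := by
        exact Summable.tsum_le_tsum (fun α => hTle α (f α)) h1 (hsumf f)
      _ = 1 * ‖f‖ := by rw [hnorm, one_mul]
  set S : lp G 1 →L[ℝ] F := Slin.mkContinuous 1 hSbound with hSdef
  have hS_single : ∀ (α : Γ) (g : G α), S (lp.single 1 α g) = T α g := by
    intro α g
    show ∑' γ, T γ ((lp.single 1 α g : lp G 1) γ) = T α g
    rw [tsum_eq_single α]
    · rw [lp.single_apply_self]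
    · intro γ hγ
      rw [lp.single_apply_ne _ _ _ hγ, map_zero]
  -- density in F
  have hdenseF : Dense ((Submodule.span ℝ (Set.range δ) : Submodule ℝ F) : Set F) :=
    Submodule.dense_iff_topologicalClosure_eq_top.mpr hF.dense_span
  -- S ∘ R = id
  have hSR : S.comp R = ContinuousLinearMap.id ℝ F := by
    refine ContinuousLinearMap.ext_on hdenseF ?_
    rintro _ ⟨x, rfl⟩
    show S (R (δ x)) = δ x
    rw [hRδ]
    rcases x.2 with hx | hx
    · rw [hf₀_N x hx, map_zero]
      exact (hF.vanish x hx).symm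
    · obtain ⟨α, hα⟩ := Set.mem_iUnion.mp hx
      rw [hf₀_mem x α hα, hS_single, hT2]
  -- density in lp G 1
  set s : Set (lp G 1) := ⋃ α, (fun g => (lp.single 1 α g : lp G 1)) '' Set.range (δG α)
    with hs
  set C : Submodule ℝ (lp G 1) := (Submodule.span ℝ s).topologicalClosure with hC
  have hCclosed : IsClosed (C : Set (lp G 1)) := Submodule.isClosed_topologicalClosure _
  have hsingle_mem : ∀ (α : Γ) (g : G α), (lp.single 1 α g : lp G 1) ∈ C := by
    intro α
    have hDclosed : IsClosed ((Submodule.comap ((singleCLM α : G α →L[ℝ] lp G 1) :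
        G α →ₗ[ℝ] lp G 1) C : Submodule ℝ (G α)) : Set (G α)) :=
      hCclosed.preimage (singleCLM α).continuous
    have hsub : Submodule.span ℝ (Set.range (δG α)) ≤
        Submodule.comap ((singleCLM α : G α →L[ℝ] lp G 1) : G α →ₗ[ℝ] lp G 1) C := by
      rw [Submodule.span_le]
      rintro _ ⟨y, rfl⟩
      show (lp.single 1 α (δG α y) : lp G 1) ∈ C
      refine Submodule.le_topologicalClosure _ (Submodule.subset_span ?_)
      exact Set.mem_iUnion.mpr ⟨α, ⟨δG α y, ⟨y, rfl⟩, rfl⟩⟩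
    have hfin := Submodule.topologicalClosure_minimal _ hsub hDclosed
    rw [(hG α).dense_span] at hfin
    intro g
    exact hfin (Submodule.mem_top (x := g))
  have hCtop : C = ⊤ := by
    rw [eq_top_iff]
    intro f _
    have hsum := lp.hasSum_single (E := G) (p := 1) (by norm_num) f
    refine hCclosed.mem_of_tendsto hsum (Filter.Eventually.of_forall fun t => ?_)
    exact Submodule.sum_mem _ fun i _ => hsingle_mem i (f i)
  have hdenseLp : Dense ((Submodule.span ℝ s : Submodule ℝ (lp G 1)) : Set (lp G 1)) :=
    Submodule.dense_iff_topologicalClosure_eq_top.mpr hCtop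
  -- R ∘ S = id
  have hRS : R.comp S = ContinuousLinearMap.id ℝ (lp G 1) := by
    refine ContinuousLinearMap.ext_on hdenseLp ?_
    rintro _ ⟨_, ⟨α, rfl⟩, _, ⟨y, rfl⟩, rfl⟩
    show R (S (lp.single 1 α (δG α y))) = lp.single 1 α (δG α y)
    rw [hS_single, hT2, hRδ]
    rcases y.2 with hy | hy
    · have h0 : δG α y = 0 := (hG α).vanish y hy
      rw [hf₀_N _ hy, h0]
      have : (lp.single 1 α (0 : G α) : lp G 1) = 0 := map_zero (singleCLM α)
      rw [this]
    · rw [hf₀_mem _ α hy]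
  -- conclusion
  have h1 : Function.LeftInverse S R := fun x => by
    have := congrFun (congrArg (DFunLike.coe) hSR) x
    simpa using this
  have h2 : Function.RightInverse S R := fun y => by
    have := congrFun (congrArg (DFunLike.coe) hRS) y
    simpa using this
  exact ⟨ContinuousLinearEquiv.equivOfInverse R S h1 h2⟩
end

section
/- For every infinite metric space M with density character Γ, the space Lip_0(M) contains a subspace linearly isomorphic to c_0(Γ): there exists a family {f_α}_{α∈Γ} of 1-Lipschitz functions in Lip_0(M) which is equivalent to the unit vector basis of c_0(Γ). -/
open scoped NNReal ENNReal

namespace Stmt3Aux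
open Cardinal Set

universe u
variable {M : Type u} [MetricSpace M]

/-- `ε`-separated set. -/
def Sep (ε : ℝ) (D : Set M) : Prop := ∀ x ∈ D, ∀ y ∈ D, x ≠ y → ε ≤ dist x y

/-- `ε`-net. -/
def NetAt (ε : ℝ) (D : Set M) : Prop := ∀ z : M, ∃ x ∈ D, dist z x < ε

lemma exists_maximal_sep {ε : ℝ} (hε : 0 < ε) :
    ∃ D : Set M, Sep ε D ∧ NetAt ε D := by
  have hub : ∀ c ⊆ {D : Set M | Sep ε D}, IsChain (· ⊆ ·) c → c.Nonempty →
      ∃ ub ∈ {D : Set M | Sep ε D}, ∀ s ∈ c, s ⊆ ub := by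
    intro c hc hchain _
    refine ⟨⋃₀ c, ?_, fun s hs => subset_sUnion_of_mem hs⟩
    intro x hx y hy hxy
    obtain ⟨s, hs, hxs⟩ := hx
    obtain ⟨t, ht, hyt⟩ := hy
    rcases hchain.total hs ht with hst | hts
    · exact hc ht x (hst hxs) y hyt hxy
    · exact hc hs x hxs y (hts hyt) hxy
  obtain ⟨m, -, hm⟩ := zorn_subset_nonempty {D : Set M | Sep ε D} hub ∅
    (fun x hx => absurd hx (Set.notMem_empty x))
  refine ⟨m, hm.prop, ?_⟩
  intro z
  by_contra h
  push_neg at h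
  have hins : Sep ε (insert z m) := by
    intro x hx y hy hxy
    rcases hx with rfl | hx
    · rcases hy with rfl | hy
      · exact absurd rfl hxy
      · exact h y hy
    · rcases hy with rfl | hy
      · rw [dist_comm]; exact h x hx
      · exact hm.prop x hx y hy hxy
  have hzm : z ∈ m := hm.mem_of_prop_insert hins
  have h0 := h z hzm
  simp at h0
  linarith

lemma dc_le_mk_dense {D : Set M} (hD : Dense D) : densityCharacter M ≤ #D :=
  ciInf_le (OrderBot.bddBelow _) (⟨D, hD⟩ : {s : Set M // Dense s})

lemma exists_dense_mk_eq_dc :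
    ∃ D : Set M, Dense D ∧ #D = densityCharacter M := by
  have : Nonempty {s : Set M // Dense s} := ⟨⟨Set.univ, dense_univ⟩⟩
  have h := csInf_mem (Set.range_nonempty (fun s : {s : Set M // Dense s} => #s.1))
  obtain ⟨⟨D, hD⟩, heq⟩ := h
  exact ⟨D, hD, heq⟩

lemma mk_sep_le_dc {ε : ℝ} (hε : 0 < ε) {D : Set M} (hD : Sep ε D) :
    #D ≤ densityCharacter M := by
  obtain ⟨S, hS, hSc⟩ := exists_dense_mk_eq_dc (M := M)
  rw [← hSc]
  have hsel : ∀ x : D, ∃ p : S, dist (x : M) (p : M) < ε / 2 := by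
    intro x
    obtain ⟨p, hp, hd⟩ := hS.exists_dist_lt (x : M) (ε := ε/2) (by linarith)
    exact ⟨⟨p, hp⟩, hd⟩
  choose f hf using hsel
  have hinj : Function.Injective f := by
    intro x y hxy
    by_contra hne
    have hne' : (x : M) ≠ y := fun h => hne (Subtype.ext h)
    have := hD x x.2 y y.2 hne'
    have h1 := hf x
    have h2 := hf y
    rw [hxy] at h1
    have : dist (x : M) (y : M) < ε :=
      calc dist (x : M) (y : M) ≤ dist (x : M) (f y : M) + dist (y : M) (f y : M) :=
            dist_triangle_right _ _ _
        _ < ε / 2 + ε / 2 := add_lt_add h1 h2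
        _ = ε := by ring
    linarith [hD x x.2 y y.2 hne']
  exact mk_le_of_injective hinj

lemma aleph0_le_dc [Infinite M] : ℵ₀ ≤ densityCharacter M := by
  obtain ⟨D, hD, hDc⟩ := exists_dense_mk_eq_dc (M := M)
  rw [← hDc]
  rw [aleph0_le_mk_iff, Set.infinite_coe_iff]
  intro hfin
  have : D = Set.univ := hfin.isClosed.closure_eq ▸ hD.closure_eq
  exact (Set.infinite_univ (α := M)) (this ▸ hfin)


lemma mk_diff_eq_self {α : Type u} {s t : Set α} (hs : ℵ₀ ≤ #s) (ht : #t < #s) :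
    #(s \ t : Set α) = #s := by
  refine le_antisymm (mk_le_mk_of_subset diff_subset) ?_
  by_contra hlt
  push_neg at hlt
  have hsub : s ⊆ (s \ t) ∪ t := fun x hx => by
    by_cases hxt : x ∈ t
    · exact Or.inr hxt
    · exact Or.inl ⟨hx, hxt⟩
  have : #s ≤ #(s \ t : Set α) + #t := (mk_le_mk_of_subset hsub).trans (mk_union_le _ _)
  exact absurd this (not_le.2 ((Cardinal.add_lt_of_lt hs hlt ht)))

lemma lt_mk_diff {α : Type u} {s t : Set α} {ν : Cardinal.{u}} (hν : ℵ₀ ≤ ν)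
    (hs : ν < #s) (ht : #t ≤ ν) : ν < #(s \ t : Set α) := by
  by_contra hle
  push_neg at hle
  have hsub : s ⊆ (s \ t) ∪ t := fun x hx => by
    by_cases hxt : x ∈ t
    · exact Or.inr hxt
    · exact Or.inl ⟨hx, hxt⟩
  have : #s ≤ #(s \ t : Set α) + #t := (mk_le_mk_of_subset hsub).trans (mk_union_le _ _)
  have : #s ≤ ν := this.trans (by
    calc #(s \ t : Set α) + #t ≤ ν + ν := add_le_add hle ht
      _ = ν := Cardinal.add_eq_self hν)
  exact absurd hs (not_lt.2 this)

lemma pigeonhole {α β : Type u} (T : Set α) (f : α → β) {ν : Cardinal.{u}}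
    (hν : ℵ₀ ≤ ν) (hT : ν < #T) (hβ : #β ≤ ν) :
    ∃ b : β, ν < #{x : α | x ∈ T ∧ f x = b} := by
  by_contra hcon
  push_neg at hcon
  have hcov : T ⊆ ⋃ b : β, {x : α | x ∈ T ∧ f x = b} :=
    fun x hx => Set.mem_iUnion.2 ⟨f x, hx, rfl⟩
  have h1 : #T ≤ #(⋃ b : β, {x : α | x ∈ T ∧ f x = b}) := mk_le_mk_of_subset hcov
  have h2 := Cardinal.mk_iUnion_le (fun b : β => {x : α | x ∈ T ∧ f x = b})
  have h3 : (⨆ b : β, #{x : α | x ∈ T ∧ f x = b}) ≤ ν := by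
    rcases isEmpty_or_nonempty β with hβe | hβn
    · simp [ciSup_of_empty]
    · exact ciSup_le' hcon
  have h4 : #T ≤ ν := by
    calc #T ≤ #β * ⨆ b : β, #{x : α | x ∈ T ∧ f x = b} := h1.trans h2
      _ ≤ ν * ν := mul_le_mul' hβ h3
      _ = ν := Cardinal.mul_eq_self hν
  exact absurd hT (not_lt.2 h4)

lemma avoidance {α : Type u} (T : Set α) (hT : ℵ₀ ≤ #T) (h : α → α)
    (hfix : ∀ x ∈ T, h x ≠ x) :
    ∃ A ⊆ T, #A = #T ∧ ∀ a ∈ A, ∀ b ∈ A, h b ≠ a := by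
  set S : Set (Set α) := {A | A ⊆ T ∧ ∀ a ∈ A, ∀ b ∈ A, h b ≠ a} with hS
  have hub : ∀ c ⊆ S, IsChain (· ⊆ ·) c → c.Nonempty → ∃ ub ∈ S, ∀ s ∈ c, s ⊆ ub := by
    intro c hc hchain _
    refine ⟨⋃₀ c, ⟨?_, ?_⟩, fun s hs => subset_sUnion_of_mem hs⟩
    · exact fun x hx => by
        obtain ⟨s, hs, hxs⟩ := hx
        exact (hc hs).1 hxs
    · intro a ha b hb
      obtain ⟨s, hs, has⟩ := ha
      obtain ⟨t, ht, hbt⟩ := hb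
      rcases hchain.total hs ht with hst | hts
      · exact (hc ht).2 a (hst has) b hbt
      · exact (hc hs).2 a has b (hts hbt)
  obtain ⟨m, -, hm⟩ := zorn_subset_nonempty S hub ∅
    ⟨fun x hx => absurd hx (Set.notMem_empty x), fun a ha => absurd ha (Set.notMem_empty a)⟩
  by_cases hcard : #m = #T
  · exact ⟨m, hm.prop.1, hcard, hm.prop.2⟩
  have hlt : #m < #T := lt_of_le_of_ne (mk_le_mk_of_subset hm.prop.1) hcard
  -- every x in T is in m, h '' m, or h⁻¹' m
  have hcov : ∀ x ∈ T, x ∈ m ∨ x ∈ h '' m ∨ h x ∈ m := by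
    intro x hx
    by_contra hnx
    push_neg at hnx
    obtain ⟨hx1, hx2, hx3⟩ := hnx
    have hins : insert x m ∈ S := by
      refine ⟨insert_subset hx hm.prop.1, ?_⟩
      intro a ha b hb
      rcases ha with rfl | ha
      · rcases hb with rfl | hb
        · exact hfix _ hx
        · exact fun hba => hx2 ⟨b, hb, hba⟩
      · rcases hb with rfl | hb
        · exact fun hba => hx3 (hba ▸ ha)
        · exact hm.prop.2 a ha b hb
    exact hx1 (hm.mem_of_prop_insert hins)
  set W : Set α := m ∪ h '' m with hW
  have hWlt : #W < #T := by
    calc #W ≤ #m + #(h '' m) := mk_union_le _ _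
      _ ≤ #m + #m := add_le_add le_rfl mk_image_le
      _ < #T := Cardinal.add_lt_of_lt hT hlt hlt
  have hAT : #(T \ W : Set α) = #T := mk_diff_eq_self hT hWlt
  refine ⟨T \ W, diff_subset, hAT, ?_⟩
  intro a ha b hb
  have hbm : h b ∈ m := by
    rcases hcov b hb.1 with h1 | h2 | h3
    · exact absurd (Or.inl h1) hb.2
    · exact absurd (Or.inr h2) hb.2
    · exact h3
  exact fun hba => ha.2 (Or.inl (hba ▸ hbm))


lemma mk_iUnion_nat_le {α : Type u} (f : ℕ → Set α) {c : Cardinal.{u}} (hc : ℵ₀ ≤ c)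
    (h : ∀ n, #(f n) ≤ c) : #(⋃ n, f n) ≤ c := by
  have he : (⋃ n, f n) = ⋃ n : ULift.{u} ℕ, f n.down := by
    ext x
    simp only [Set.mem_iUnion]
    exact ⟨fun ⟨n, hn⟩ => ⟨⟨n⟩, hn⟩, fun ⟨n, hn⟩ => ⟨n.down, hn⟩⟩
  rw [he]
  have h1 : #(⋃ n : ULift.{u} ℕ, f n.down) ≤ #(ULift.{u} ℕ) * ⨆ n : ULift.{u} ℕ, #(f n.down) :=
    Cardinal.mk_iUnion_le _
  have h2 : #(ULift.{u} ℕ) = ℵ₀ := Cardinal.mk_eq_aleph0 _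
  have h3 : (⨆ n : ULift.{u} ℕ, #(f n.down)) ≤ c := ciSup_le' (fun n => h n.down)
  calc #(⋃ n : ULift.{u} ℕ, f n.down) ≤ ℵ₀ * c := by
        rw [← h2]; exact h1.trans (mul_le_mul' le_rfl h3)
    _ ≤ c * c := mul_le_mul' hc le_rfl
    _ = c := Cardinal.mul_eq_self hc

/-- Case II of the main geometric lemma: unattained supremum. -/
lemma lemA_caseII (κ : Cardinal.{u}) (hκ : ℵ₀ < κ) (D : ℕ → Set M)
    (ε : ℕ → ℝ) (hεpos : ∀ n, 0 < ε n) (hεanti : Antitone ε)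
    (hsep : ∀ n, Sep (ε n) (D n))
    (hlt : ∀ n, #(D n) < κ)
    (hcof : ∀ c < κ, ∃ m, c < #(D m))
    (hUnion : #(⋃ n, D n) ≤ κ) :
    ∃ (S : Set M) (r : M → ℝ), #S = κ ∧ (∀ x ∈ S, 0 < r x) ∧
      (∀ x ∈ S, ∀ x' ∈ S, x ≠ x' → r x + r x' ≤ dist x x') := by
  classical
  -- choose a strictly increasing sequence of levels with strictly increasing cardinalities
  have hstepEx : ∀ k : ℕ, ∃ m : ℕ, (∀ n ≤ k, #(D n) < #(D m)) ∧ ℵ₀ < #(D m) := by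
    intro k
    set c : Cardinal.{u} := ℵ₀ ⊔ (Finset.range (k+1)).sup (fun n => #(D n)) with hc
    have hcκ : c < κ := by
      rw [hc, sup_lt_iff]
      refine ⟨hκ, ?_⟩
      rw [Finset.sup_lt_iff (lt_of_le_of_lt zero_le hκ)]
      exact fun n _ => hlt n
    obtain ⟨m, hm⟩ := hcof c hcκ
    refine ⟨m, fun n hn => lt_of_le_of_lt ?_ hm, lt_of_le_of_lt le_sup_left hm⟩
    calc #(D n) ≤ (Finset.range (k+1)).sup (fun n => #(D n)) :=
          Finset.le_sup (f := fun n => #(D n)) (Finset.mem_range.2 (Nat.lt_succ_of_le hn))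
      _ ≤ c := le_sup_right
  choose step hstep1 hstep2 using hstepEx
  set g : ℕ → ℕ := fun i => step^[i+1] 0 with hg
  have hgsucc : ∀ i, g (i+1) = step (g i) := by
    intro i
    rw [hg]
    exact Function.iterate_succ_apply' step (i+1) 0
  have hg1 : ∀ i, ℵ₀ < #(D (g i)) := by
    intro i
    cases i with
    | zero => exact hstep2 0
    | succ i => rw [hgsucc i]; exact hstep2 (g i)
  have hg2 : ∀ i, ∀ n ≤ g i, #(D n) < #(D (g (i+1))) := by
    intro i n hn
    rw [hgsucc i]
    exact hstep1 (g i) n hn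
  have hμmono : ∀ i, #(D (g i)) < #(D (g (i+1))) := fun i => hg2 i (g i) le_rfl
  have hgmono : ∀ i, g i < g (i+1) := by
    intro i
    by_contra hle
    push_neg at hle
    exact absurd (hg2 i (g (i+1)) hle) (lt_irrefl _)
  have hgsm : StrictMono g := strictMono_nat_of_lt_succ hgmono
  have hμsm : StrictMono (fun i => #(D (g i))) := strictMono_nat_of_lt_succ hμmono
  have hcof' : ∀ c < κ, ∃ i, c < #(D (g i)) := by
    intro c hc
    obtain ⟨m, hm⟩ := hcof c hc
    exact ⟨m+1, hm.trans (hg2 m m (hgsm.le_apply))⟩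
  -- levels
  set L : ℕ → Set M := fun i => D (g i) with hL
  set η : ℕ → ℝ := fun i => ε (g i) with hη
  have hηpos : ∀ i, 0 < η i := fun i => hεpos (g i)
  have hηanti : ∀ {j i}, j ≤ i → η i ≤ η j := fun {j i} h => hεanti (hgsm.monotone h)
  have hLsep : ∀ i, Sep (η i) (L i) := fun i => hsep (g i)
  set ν : ℕ → Cardinal.{u} := fun i => Nat.casesOn i ℵ₀ (fun i' => #(L i')) with hν
  have hνinf : ∀ i, ℵ₀ ≤ ν i := by
    intro i
    cases i with
    | zero => exact le_rfl
    | succ i => exact (hg1 i).le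
  have hbase : ∀ i, ν i < #(L i) := by
    intro i
    cases i with
    | zero => exact hg1 0
    | succ i => exact hμmono i
  have hνle : ∀ {j i}, j < i → #(L j) ≤ ν i := by
    intro j i hj
    cases i with
    | zero => omega
    | succ i => exact hμsm.monotone (Nat.lt_succ_iff.1 hj)
  -- conflict-constant extraction at each level
  have hex : ∀ i : ℕ, ∃ F : Set M, F ⊆ L i ∧ ν i < #F ∧ ∃ C : Set M, C.Countable ∧
      ∀ x ∈ F, ∀ k < i, ∀ z ∈ L k, dist z x < η k / 4 + η i / 4 → z ∈ C := by
    intro i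
    suffices h : ∀ j, j ≤ i → ∃ F : Set M, F ⊆ L i ∧ ν i < #F ∧ ∃ C : Set M, C.Countable ∧
        ∀ x ∈ F, ∀ k < j, ∀ z ∈ L k, dist z x < η k / 4 + η i / 4 → z ∈ C from h i le_rfl
    intro j
    induction j with
    | zero =>
      exact fun _ => ⟨L i, subset_rfl, hbase i, ∅, countable_empty,
        fun x _ k hk => absurd hk (Nat.not_lt_zero k)⟩
    | succ j ih =>
      intro hji
      obtain ⟨F, hFL, hFcard, C, hCc, hC⟩ := ih (Nat.le_of_succ_le hji)
      set f : M → Option (↥(L j)) := fun x =>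
        if hx : ∃ z ∈ L j, dist z x < η j / 4 + η i / 4 then
          some ⟨hx.choose, hx.choose_spec.1⟩ else none with hf
      have hβ : #(Option (↥(L j))) ≤ ν i := by
        rw [Cardinal.mk_option]
        have h1 : #(L j) ≤ ν i := hνle hji
        calc #(L j) + 1 ≤ ν i + ν i := add_le_add h1 (le_trans (by simp) (hνinf i))
          _ = ν i := Cardinal.add_eq_self (hνinf i)
      obtain ⟨b, hb⟩ := pigeonhole F f (hνinf i) hFcard hβ
      refine ⟨{x : M | x ∈ F ∧ f x = b}, fun x hx => hFL hx.1, hb,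
        C ∪ (Option.elim b ∅ (fun z => {z.1})), hCc.union (by
          cases b with
          | none => exact countable_empty
          | some z => exact countable_singleton _), ?_⟩
      intro x hx k hk z hz hdist
      rcases Nat.lt_succ_iff_lt_or_eq.1 hk with hk' | rfl
      · exact Set.mem_union_left _ (hC x hx.1 k hk' z hz hdist)
      · -- k = j : use constancy of the fiber
        have hxev : ∃ z' ∈ L k, dist z' x < η k / 4 + η i / 4 := ⟨z, hz, hdist⟩
        have hfx : f x = some ⟨hxev.choose, hxev.choose_spec.1⟩ := dif_pos hxev
        have hbval : b = some ⟨hxev.choose, hxev.choose_spec.1⟩ := hx.2 ▸ hfx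
        have hzz : z = hxev.choose := by
          by_contra hne
          have h1 := hLsep k z hz hxev.choose hxev.choose_spec.1 hne
          have h2 := hxev.choose_spec.2
          have hηik : η i ≤ η k := hηanti (Nat.le_of_succ_le hji)
          have : dist z hxev.choose ≤ dist z x + dist hxev.choose x :=
            dist_triangle_right _ _ _
          linarith
        refine Set.mem_union_right _ ?_
        rw [hbval, hzz]
        simp
  choose F hFL hFcard C hCc hCprop using hex
  set T : Set M := ⋃ i, C i with hT
  have hTc : T.Countable := Set.countable_iUnion hCc
  have hTmk : #T ≤ ℵ₀ := (Cardinal.mk_le_aleph0_iff).2 hTc.to_subtype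
  set Sel : ℕ → Set M := fun i => F i \ T with hSel
  have hSelcard : ∀ i, ν i < #(Sel i) :=
    fun i => lt_mk_diff (hνinf i) (hFcard i) (hTmk.trans (hνinf i))
  -- cross-level separation
  have hsepSel : ∀ {i i' : ℕ} {x x' : M}, i < i' → x ∈ Sel i → x' ∈ Sel i' →
      η i / 4 + η i' / 4 ≤ dist x x' := by
    intro i i' x x' hii hx hx'
    by_contra hdd
    push_neg at hdd
    have hxL : x ∈ L i := hFL i hx.1
    have : x ∈ C i' := hCprop i' x' hx'.1 i hii x hxL (by rw [dist_comm] at hdd ⊢; exact hdd)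
    exact hx.2 (Set.mem_iUnion.2 ⟨i', this⟩)
  have hlevel_unique : ∀ {i i' : ℕ} {x : M}, x ∈ Sel i → x ∈ Sel i' → i = i' := by
    intro i i' x hx hx'
    by_contra hne
    rcases Nat.lt_or_ge i i' with h | h
    · have := hsepSel h hx hx'
      simp only [dist_self] at this
      have h1 := hηpos i
      have h2 := hηpos i'
      linarith
    · have h' : i' < i := lt_of_le_of_ne h (Ne.symm hne)
      have := hsepSel h' hx' hx
      simp only [dist_self] at this
      have h1 := hηpos i
      have h2 := hηpos i'
      linarith
  set S : Set M := ⋃ i, Sel i with hS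
  set r : M → ℝ := fun x => if h : ∃ i, x ∈ Sel i then η h.choose / 4 else 1 with hr
  have hrval : ∀ {i : ℕ} {x : M}, x ∈ Sel i → r x = η i / 4 := by
    intro i x hx
    have hex' : ∃ i', x ∈ Sel i' := ⟨i, hx⟩
    rw [hr]
    simp only [dif_pos hex']
    rw [hlevel_unique hex'.choose_spec hx]
  refine ⟨S, r, ?_, ?_, ?_⟩
  · refine le_antisymm ?_ ?_
    · refine (mk_le_mk_of_subset ?_).trans hUnion
      intro x hx
      obtain ⟨i, hi⟩ := Set.mem_iUnion.1 hx
      exact Set.mem_iUnion.2 ⟨g i, hFL i hi.1⟩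
    · by_contra hltS
      push_neg at hltS
      obtain ⟨i, hi⟩ := hcof' _ hltS
      have h1 : #(Sel (i+1)) ≤ #S := mk_le_mk_of_subset (Set.subset_iUnion Sel (i+1))
      have h2 : ν (i+1) < #(Sel (i+1)) := hSelcard (i+1)
      have h3 : ν (i+1) = #(L i) := rfl
      have : #(D (g i)) < #S := by
        rw [← h3] at *
        exact lt_of_lt_of_le h2 h1
      exact absurd hi (not_lt.2 this.le)
  · intro x hx
    obtain ⟨i, hi⟩ := Set.mem_iUnion.1 hx
    rw [hrval hi]
    have := hηpos i
    linarith
  · intro x hx x' hx' hne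
    obtain ⟨i, hi⟩ := Set.mem_iUnion.1 hx
    obtain ⟨i', hi'⟩ := Set.mem_iUnion.1 hx'
    rw [hrval hi, hrval hi']
    rcases Nat.lt_trichotomy i i' with h | rfl | h
    · exact hsepSel h hi hi'
    · have hd := hLsep i x (hFL i hi.1) x' (hFL i hi'.1) hne
      have := hηpos i
      linarith
    · have := hsepSel h hi' hi
      rw [dist_comm]
      linarith

/-- Main geometric lemma: a family of `densityCharacter M` points with radii so that the
corresponding balls are pairwise disjoint. -/
lemma lemA [Infinite M] :
    ∃ (S : Set M) (r : M → ℝ), #S = densityCharacter M ∧ (∀ x ∈ S, 0 < r x) ∧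
      (∀ x ∈ S, ∀ x' ∈ S, x ≠ x' → r x + r x' ≤ dist x x') := by
  set κ := densityCharacter M with hκdef
  have hκ : ℵ₀ ≤ κ := aleph0_le_dc
  have hpow : ∀ n : ℕ, (0:ℝ) < (1/2) ^ n := fun n => pow_pos (by norm_num) n
  choose D hDsep hDnet using fun n : ℕ => exists_maximal_sep (M := M) (hpow n)
  have hDle : ∀ n, #(D n) ≤ κ := fun n => mk_sep_le_dc (hpow n) (hDsep n)
  have hUnion : #(⋃ n, D n) ≤ κ := mk_iUnion_nat_le D hκ hDle
  have hDdense : Dense (⋃ n, D n) := by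
    rw [Metric.dense_iff]
    intro x rr hrr
    obtain ⟨n, hn⟩ := exists_pow_lt_of_lt_one hrr (by norm_num : (1/2 : ℝ) < 1)
    obtain ⟨y, hy, hdy⟩ := hDnet n x
    exact ⟨y, Metric.mem_ball.2 (by rw [dist_comm]; exact hdy.trans_le hn.le),
      Set.mem_iUnion.2 ⟨n, hy⟩⟩
  have hκle : κ ≤ #(⋃ n, D n) := dc_le_mk_dense hDdense
  by_cases hattain : ∃ n, #(D n) = κ
  · obtain ⟨n, hn⟩ := hattain
    refine ⟨D n, fun _ => (1/2)^n / 2, hn, fun x _ => by positivity, ?_⟩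
    intro x hx x' hx' hne
    have := hDsep n x hx x' hx' hne
    linarith
  push_neg at hattain
  have hlt : ∀ n, #(D n) < κ := fun n => (hDle n).lt_of_ne (hattain n)
  rcases eq_or_lt_of_le hκ with hℵ | hℵ
  · -- κ = ℵ₀ but not attained: all levels finite, totally bounded case
    have hfin : ∀ n, (D n).Finite := by
      intro n
      have := hlt n
      rw [← hℵ] at this
      exact Cardinal.lt_aleph0_iff_set_finite.1 this
    have hTB : TotallyBounded (Set.univ : Set M) := by
      rw [Metric.totallyBounded_iff]
      intro δ hδ
      obtain ⟨n, hn⟩ := exists_pow_lt_of_lt_one hδ (by norm_num : (1/2 : ℝ) < 1)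
      refine ⟨D n, hfin n, ?_⟩
      intro z _
      obtain ⟨x, hx, hdx⟩ := hDnet n z
      exact Set.mem_biUnion hx (Metric.mem_ball.2 (hdx.trans_le hn.le))
    set Q := UniformSpace.Completion M with hQ
    have hiso : Isometry ((↑) : M → Q) := UniformSpace.Completion.coe_isometry
    have hinj : Function.Injective ((↑) : M → Q) := hiso.injective
    have hTBr : TotallyBounded (Set.range ((↑) : M → Q)) := by
      rw [← Set.image_univ]
      exact hTB.image (UniformSpace.Completion.uniformContinuous_coe M)
    have hK : IsCompact (closure (Set.range ((↑) : M → Q))) :=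
      isCompact_iff_totallyBounded_isComplete.2 ⟨hTBr.closure, isClosed_closure.isComplete⟩
    have hrinf : (Set.range ((↑) : M → Q)).Infinite := Set.infinite_range_of_injective hinj
    obtain ⟨p, -, hacc⟩ := hrinf.exists_accPt_of_subset_isCompact hK subset_closure
    have haccn := accPt_iff_nhds.1 hacc
    -- points of M near p but distinct from p
    have hnear : ∀ c : ℝ, 0 < c → ∃ v : M, (v : Q) ≠ p ∧ dist (v : Q) p < c := by
      intro c hc
      obtain ⟨y, ⟨hyU, hyr⟩, hyp⟩ := haccn (Metric.ball p c) (Metric.ball_mem_nhds p hc)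
      obtain ⟨v, rfl⟩ := hyr
      exact ⟨v, hyp, by rw [← Metric.mem_ball]; exact hyU⟩
    obtain ⟨w0v, hw0⟩ := hnear 1 one_pos
    set W := {w : M // (w : Q) ≠ p} with hW
    have hstepex : ∀ w : W, ∃ v : M, (v : Q) ≠ p ∧ dist (v : Q) p < dist (w.1 : Q) p / 4 :=
      fun w => hnear _ (by have := dist_pos.2 w.2; linarith)
    set stepF : W → W := fun w => ⟨(hstepex w).choose, (hstepex w).choose_spec.1⟩ with hstepF
    set u : ℕ → W := fun j => stepF^[j] ⟨w0v, hw0.1⟩ with hu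
    set t : ℕ → ℝ := fun j => dist ((u j).1 : Q) p with ht
    have htpos : ∀ j, 0 < t j := fun j => dist_pos.2 (u j).2
    have htstep : ∀ j, t (j+1) < t j / 4 := by
      intro j
      have : u (j+1) = stepF (u j) := Function.iterate_succ_apply' stepF j _
      rw [ht]
      simp only []
      rw [this]
      exact (hstepex (u j)).choose_spec.2
    have htanti : ∀ {j k}, j < k → t k ≤ t j / 4 := by
      intro j k hjk
      have hdec : ∀ m, t (m+1) ≤ t m := by
        intro m
        have h1 := htstep m
        have h2 := htpos m
        linarith
      have hmono : ∀ a b, a ≤ b → t b ≤ t a := by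
        intro a b hab
        induction hab with
        | refl => exact le_rfl
        | step h ih => exact le_trans (hdec _) ih
      calc t k ≤ t (j+1) := hmono _ _ hjk
        _ ≤ t j / 4 := (htstep j).le
    have husep : ∀ {j k}, j < k → 3/8 * t j + 3/8 * t k ≤ dist (u j).1 (u k).1 := by
      intro j k hjk
      have h1 : dist ((u j).1 : Q) ((u k).1 : Q) = dist (u j).1 (u k).1 := hiso.dist_eq _ _
      have h2 : |dist ((u j).1 : Q) p - dist ((u k).1 : Q) p| ≤
          dist ((u j).1 : Q) ((u k).1 : Q) := abs_dist_sub_le _ _ _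
      have h3 := htanti hjk
      have h4 := htpos j
      have h5 := htpos k
      have h6 : t j - t k ≤ |t j - t k| := le_abs_self _
      rw [h1] at h2
      have : t j - t k ≤ dist (u j).1 (u k).1 := le_trans h6 h2
      linarith
    have huinj : Function.Injective (fun j => (u j).1) := by
      intro j k hjk
      have hjk' : ((u j).1 : M) = (u k).1 := hjk
      by_contra hne
      rcases Nat.lt_or_ge j k with h | h
      · have hs := husep h
        rw [hjk'] at hs
        simp only [dist_self] at hs
        have := htpos j; have := htpos k
        linarith
      · have hkj : k < j := lt_of_le_of_ne h (Ne.symm hne)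
        have hs := husep hkj
        rw [hjk'] at hs
        simp only [dist_self] at hs
        have := htpos j; have := htpos k
        linarith
    refine ⟨Set.range (fun j => (u j).1), fun x => 3/8 * dist (x : Q) p, ?_, ?_, ?_⟩
    · rw [← hℵ]
      refine le_antisymm ?_ ?_
      · exact Cardinal.mk_le_aleph0_iff.2 (Set.countable_range _).to_subtype
      · rw [Cardinal.aleph0_le_mk_iff, Set.infinite_coe_iff]
        exact Set.infinite_range_of_injective huinj
    · rintro x ⟨j, rfl⟩
      have := htpos j
      rw [ht] at this
      simp only [] at this ⊢
      linarith
    · rintro x ⟨j, rfl⟩ x' ⟨k, rfl⟩ hne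
      simp only []
      rcases Nat.lt_trichotomy j k with h | rfl | h
      · exact husep h
      · exact absurd rfl hne
      · show 3/8 * t j + 3/8 * t k ≤ dist ((u j).1) ((u k).1)
        rw [dist_comm]
        have := husep h
        linarith
  · -- κ > ℵ₀
    have hcof : ∀ c < κ, ∃ m, c < #(D m) := by
      intro c hc
      have hσ : κ ≤ ℵ₀ ⊔ ⨆ n, #(D n) := by
        refine hκle.trans ?_
        refine (mk_iUnion_nat_le D (le_sup_left) ?_).trans le_rfl
        exact fun n => le_trans (le_ciSup (by
          refine ⟨κ, ?_⟩
          rintro x ⟨n, rfl⟩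
          exact hDle n) n) le_sup_right
      have hσ' : κ ≤ ⨆ n, #(D n) := by
        rcases le_total (⨆ n, #(D n)) ℵ₀ with h | h
        · exfalso
          have : κ ≤ ℵ₀ := hσ.trans (sup_le le_rfl h)
          exact absurd hℵ (not_lt.2 this)
        · exact hσ.trans (le_of_eq (sup_eq_right.2 h))
      exact exists_lt_of_lt_ciSup (hc.trans_le hσ')
    exact lemA_caseII κ hℵ D (fun n => (1/2)^n) hpow
      (fun a b hab => pow_le_pow_of_le_one (by norm_num) (by norm_num) hab)
      hDsep hlt hcof hUnion

/-- The full geometric family: points `A`, companions `Y`, support radii `s`. -/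
lemma familyLemma [Infinite M] (base : M) :
    ∃ (A : Set M) (Y : M → M) (s : M → ℝ),
      #A = densityCharacter M ∧
      (∀ x ∈ A, 0 < s x) ∧
      (∀ x ∈ A, dist x (Y x) = 2 * s x) ∧
      (∀ x ∈ A, ∀ x' ∈ A, x ≠ x' → ∀ z : M, dist z x < s x → ¬ dist z x' < s x') ∧
      (∀ x ∈ A, ∀ x' ∈ A, ¬ dist (Y x') x < s x) ∧
      (∀ x ∈ A, ¬ dist base x < s x) := by
  classical
  obtain ⟨S, r, hScard, hrpos, hsep⟩ := lemA (M := M)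
  have hκ : ℵ₀ ≤ densityCharacter M := aleph0_le_dc
  have hSinf : ℵ₀ ≤ #S := hScard ▸ hκ
  -- companions
  have hcomp : ∀ x : M, ∃ v : M, x ∈ S →
      (v ≠ x ∧ ∀ z : M, dist z x < dist x v / 2 → dist z x < r x ∨ z = x) := by
    intro x
    by_cases hxS : x ∈ S
    · by_cases hc : ∃ z, z ≠ x ∧ dist x z < r x / 2
      · obtain ⟨v, hvne, hvd⟩ := hc
        refine ⟨v, fun _ => ⟨hvne, ?_⟩⟩
        intro z hz
        left
        have h := hrpos x hxS
        calc dist z x < dist x v / 2 := hz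
          _ < r x := by linarith
      · push_neg at hc
        set E : Set ℝ := {d : ℝ | ∃ z, z ≠ x ∧ d = dist x z} with hE
        have hEne : E.Nonempty := by
          obtain ⟨z, hz⟩ := exists_ne x
          exact ⟨dist x z, z, hz, rfl⟩
        have hEbdd : BddBelow E := ⟨0, by rintro d ⟨z, -, rfl⟩; exact dist_nonneg⟩
        set I : ℝ := sInf E with hI
        have hIlb : r x / 2 ≤ I := le_csInf hEne (by rintro d ⟨z, hz, rfl⟩; exact hc z hz)
        have hIpos : 0 < I := lt_of_lt_of_le (by have := hrpos x hxS; linarith) hIlb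
        have hlt2I : sInf E < 2 * I := lt_of_le_of_lt (le_refl I) (by linarith)
        obtain ⟨d, ⟨v, hvne, rfl⟩, hdI⟩ := (csInf_lt_iff hEbdd hEne).1 hlt2I
        refine ⟨v, fun _ => ⟨hvne, ?_⟩⟩
        intro z hz
        by_cases hzx : z = x
        · exact Or.inr hzx
        · exfalso
          have h1 : I ≤ dist x z := csInf_le hEbdd ⟨z, hzx, rfl⟩
          rw [dist_comm z x] at hz
          linarith
    · exact ⟨x, fun h => absurd h hxS⟩
  choose Y hY using hcomp
  set s : M → ℝ := fun x => dist x (Y x) / 2 with hs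
  have hspos : ∀ x ∈ S, 0 < s x := by
    intro x hx
    have := (hY x hx).1
    have hd : 0 < dist x (Y x) := dist_pos.2 (Ne.symm (hY x hx).1)
    rw [hs]
    simp only []
    linarith
  have hsupp : ∀ x ∈ S, ∀ z : M, dist z x < s x → dist z x < r x ∨ z = x :=
    fun x hx z hz => (hY x hx).2 z hz
  have hdisj : ∀ x ∈ S, ∀ x' ∈ S, x ≠ x' → ∀ z : M, dist z x < s x → ¬ dist z x' < s x' := by
    intro x hx x' hx' hne z hz hz'
    have h1 := hsupp x hx z hz
    have h2 := hsupp x' hx' z hz'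
    have hrr := hsep x hx x' hx' hne
    have hrx := hrpos x hx
    have hrx' := hrpos x' hx'
    rcases h1 with h1 | rfl
    · rcases h2 with h2 | rfl
      · have : dist x x' ≤ dist z x + dist z x' := dist_triangle_left _ _ _
        linarith
      · rw [dist_comm] at h1
        linarith
    · rcases h2 with h2 | h2
      · linarith
      · exact hne h2
  -- remove the point whose support contains `base`
  set B : Set M := {x ∈ S | dist base x < s x} with hB
  have hBsub : B.Subsingleton := by
    intro x hx x' hx'
    by_contra hne
    exact hdisj x hx.1 x' hx'.1 hne base hx.2 hx'.2
  have hBmk : #B ≤ 1 := by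
    rcases hBsub.eq_empty_or_singleton with h | ⟨x, h⟩
    · rw [h]; simp
    · rw [h]; simp
  set S₁ : Set M := S \ B with hS₁
  have hS₁card : #S₁ = #S := mk_diff_eq_self hSinf (lt_of_le_of_lt hBmk
    (lt_of_lt_of_le (by exact lt_of_lt_of_le Cardinal.one_lt_aleph0 le_rfl) hSinf))
  have hS₁S : S₁ ⊆ S := diff_subset
  have hS₁base : ∀ x ∈ S₁, ¬ dist base x < s x := by
    intro x hx hlt
    exact hx.2 ⟨hx.1, hlt⟩
  have hS₁inf : ℵ₀ ≤ #S₁ := hS₁card ▸ hSinf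
  -- own companion is outside own support
  have hown : ∀ x ∈ S, ¬ dist (Y x) x < s x := by
    intro x hx hlt
    have h2 : 0 < dist x (Y x) := dist_pos.2 (Ne.symm (hY x hx).1)
    rw [dist_comm, hs] at hlt
    simp only [] at hlt
    linarith
  -- avoidance
  set U : Set M := {x ∈ S₁ | ∀ x' ∈ S₁, x' ≠ x → ¬ dist (Y x) x' < s x'} with hU
  set V : Set M := S₁ \ U with hV
  have hUV : S₁ ⊆ U ∪ V := fun x hx => by
    by_cases h : x ∈ U
    · exact Or.inl h
    · exact Or.inr ⟨hx, h⟩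
  have hcases : #U = #S₁ ∨ #V = #S₁ := by
    by_contra hand
    push_neg at hand
    have h1 : #U < #S₁ := lt_of_le_of_ne (mk_le_mk_of_subset (fun x hx => hx.1)) hand.1
    have h2 : #V < #S₁ := lt_of_le_of_ne (mk_le_mk_of_subset diff_subset) hand.2
    have : #S₁ ≤ #U + #V := (mk_le_mk_of_subset hUV).trans (mk_union_le _ _)
    exact absurd this (not_le.2 (Cardinal.add_lt_of_lt hS₁inf h1 h2))
  rcases hcases with hcase | hcase
  · -- U already works
    refine ⟨U, Y, s, by rw [hcase, hS₁card, hScard], fun x hx => hspos x (hS₁S hx.1),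
      fun x hx => by show dist x (Y x) = 2 * (dist x (Y x) / 2); ring, ?_, ?_,
      fun x hx => hS₁base x hx.1⟩
    · exact fun x hx x' hx' hne z hz => hdisj x (hS₁S hx.1) x' (hS₁S hx'.1) hne z hz
    · intro x hx x' hx'
      by_cases hne : x = x'
      · subst hne; exact hown x (hS₁S hx.1)
      · exact hx'.2 x hx.1 hne
  · -- use the abstract avoidance lemma on V
    have hVmem : ∀ x ∈ V, ∃ w, w ∈ S₁ ∧ w ≠ x ∧ dist (Y x) w < s w := by
      intro x hx
      have := hx.2
      rw [hU] at this
      simp only [Set.mem_setOf_eq, not_and, not_forall] at this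
      obtain ⟨x', hx', hne, hlt⟩ := this hx.1
      exact ⟨x', hx', hne, not_not.1 hlt⟩
    have hHex : ∀ x : M, ∃ w : M, x ∈ V → (w ∈ S₁ ∧ w ≠ x ∧ dist (Y x) w < s w) := by
      intro x
      by_cases hx : x ∈ V
      · obtain ⟨w, hw⟩ := hVmem x hx
        exact ⟨w, fun _ => hw⟩
      · exact ⟨x, fun h => absurd h hx⟩
    choose H hH using hHex
    have hVinf : ℵ₀ ≤ #V := hcase ▸ hS₁inf
    obtain ⟨A, hAV, hAcard, hAavoid⟩ := avoidance V hVinf H (fun x hx => (hH x hx).2.1)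
    have hAS₁ : A ⊆ S₁ := fun x hx => (hAV hx).1
    refine ⟨A, Y, s, by rw [hAcard, hcase, hS₁card, hScard],
      fun x hx => hspos x (hS₁S (hAS₁ hx)),
      fun x hx => by show dist x (Y x) = 2 * (dist x (Y x) / 2); ring, ?_, ?_,
      fun x hx => hS₁base x (hAS₁ hx)⟩
    · exact fun x hx x' hx' hne z hz => hdisj x (hS₁S (hAS₁ hx)) x' (hS₁S (hAS₁ hx')) hne z hz
    · intro x hx x' hx' hlt
      by_cases hne : x = x'
      · subst hne; exact hown x (hS₁S (hAS₁ hx)) hlt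
      · -- x ≠ x', Y x' lands in support of x; but it also lands in support of H x'
        have hx'V : x' ∈ V := hAV hx'
        obtain ⟨hHS₁, hHne, hHlt⟩ := hH x' hx'V
        by_cases hxH : x = H x'
        · exact hAavoid x hx x' hx' (by rw [← hxH])
        · exact hdisj x (hS₁S (hAS₁ hx)) (H x') (hS₁S hHS₁) hxH (Y x') hlt hHlt

end Stmt3Aux

/-- For every infinite metric space `M` with density character `Γ`,
`Lip₀(M)` contains a family of `1`-Lipschitz functions (vanishing at the base point)
which is equivalent to the unit vector basis of `c₀(Γ)`: the Lip₀-norm (i.e. the best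
Lipschitz constant) of every finite linear combination is, up to constants `c, C`,
the supremum of the absolute values of the coefficients. -/
theorem stmt_3 (M : Type u) [MetricSpace M] [Infinite M] (base : M)
    (Γ : Type u) (hΓ : Cardinal.mk Γ = densityCharacter M) :
    ∃ f : Γ → M → ℝ,
      (∀ α : Γ, LipschitzWith 1 (f α) ∧ f α base = 0) ∧
      ∃ c C : ℝ≥0, 0 < c ∧
        (∀ a : Γ →₀ ℝ,
          LipschitzWith (C * a.support.sup fun α => ‖a α‖₊)
            (fun x => ∑ α ∈ a.support, a α * f α x)) ∧
        (∀ (a : Γ →₀ ℝ) (L : ℝ≥0),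
          LipschitzWith L (fun x => ∑ α ∈ a.support, a α * f α x) →
          c * (a.support.sup fun α => ‖a α‖₊) ≤ L) := by
  classical
  obtain ⟨A, Y, s, hAcard, hspos, hYdist, hdisj, havoid, hbase⟩ :=
    Stmt3Aux.familyLemma (M := M) base
  obtain ⟨e⟩ : Nonempty (Γ ≃ ↥A) := Cardinal.eq.1 (hΓ.trans hAcard.symm)
  set xp : Γ → M := fun γ => (e γ : M) with hxp
  have hxpA : ∀ γ, xp γ ∈ A := fun γ => (e γ).2
  have hxpinj : Function.Injective xp := fun γ γ' h => e.injective (Subtype.ext h)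
  set f : Γ → M → ℝ := fun γ z => max (s (xp γ) - dist z (xp γ)) 0 with hf
  have hfpos_iff : ∀ γ z, f γ z ≠ 0 ↔ dist z (xp γ) < s (xp γ) := by
    intro γ z
    constructor
    · intro h
      by_contra hlt
      push_neg at hlt
      exact h (max_eq_right (by linarith))
    · intro h
      have h0 : 0 < s (xp γ) - dist z (xp γ) := by linarith
      have : f γ z = s (xp γ) - dist z (xp γ) := max_eq_left h0.le
      rw [this]
      exact ne_of_gt h0
  have hlip : ∀ γ, LipschitzWith 1 (f γ) := by
    intro γ
    refine LipschitzWith.of_dist_le_mul (fun z w => ?_)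
    rw [Real.dist_eq, NNReal.coe_one, one_mul]
    have h1 : |max (s (xp γ) - dist z (xp γ)) 0 - max (s (xp γ) - dist w (xp γ)) 0| ≤
        |(s (xp γ) - dist z (xp γ)) - (s (xp γ) - dist w (xp γ))| := abs_max_sub_max_le_abs _ _ _
    have h2 : (s (xp γ) - dist z (xp γ)) - (s (xp γ) - dist w (xp γ))
        = dist w (xp γ) - dist z (xp γ) := by ring
    rw [h2] at h1
    have h3 : |dist w (xp γ) - dist z (xp γ)| ≤ dist w z := abs_dist_sub_le _ _ _
    calc |f γ z - f γ w| ≤ |dist w (xp γ) - dist z (xp γ)| := h1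
      _ ≤ dist w z := h3
      _ = dist z w := dist_comm _ _
  have hfbase : ∀ γ, f γ base = 0 := by
    intro γ
    have h := not_lt.1 (hbase (xp γ) (hxpA γ))
    exact max_eq_right (by linarith)
  have hself : ∀ γ, f γ (xp γ) = s (xp γ) := by
    intro γ
    have h := hspos (xp γ) (hxpA γ)
    show max (s (xp γ) - dist (xp γ) (xp γ)) 0 = s (xp γ)
    rw [dist_self, sub_zero]
    exact max_eq_left h.le
  have hother : ∀ γ γ', γ ≠ γ' → f γ' (xp γ) = 0 := by
    intro γ γ' hne
    have hxne : xp γ ≠ xp γ' := fun h => hne (hxpinj h)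
    have hz : dist (xp γ) (xp γ) < s (xp γ) := by
      rw [dist_self]; exact hspos _ (hxpA γ)
    have h := not_lt.1 (hdisj (xp γ) (hxpA γ) (xp γ') (hxpA γ') hxne (xp γ) hz)
    exact max_eq_right (by linarith)
  have hYval : ∀ γ γ', f γ' (Y (xp γ)) = 0 := by
    intro γ γ'
    have h := not_lt.1 (havoid (xp γ') (hxpA γ') (xp γ) (hxpA γ))
    exact max_eq_right (by linarith)
  have hsub : ∀ z : M, ∀ γ γ', f γ z ≠ 0 → f γ' z ≠ 0 → γ = γ' := by
    intro z γ γ' hγ hγ'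
    by_contra hne
    have hxne : xp γ ≠ xp γ' := fun h => hne (hxpinj h)
    exact hdisj (xp γ) (hxpA γ) (xp γ') (hxpA γ') hxne z ((hfpos_iff γ z).1 hγ)
      ((hfpos_iff γ' z).1 hγ')
  refine ⟨f, fun γ => ⟨hlip γ, hfbase γ⟩, 1/2, 2, by norm_num, ?_, ?_⟩
  · -- upper bound
    intro a
    set Q : ℝ≥0 := a.support.sup fun α => ‖a α‖₊ with hQ
    refine LipschitzWith.of_dist_le_mul (fun z w => ?_)
    set T : Finset Γ := a.support.filter (fun α => f α z ≠ 0 ∨ f α w ≠ 0) with hT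
    have hgzw : (∑ α ∈ a.support, a α * f α z) - (∑ α ∈ a.support, a α * f α w)
        = ∑ α ∈ T, (a α * f α z - a α * f α w) := by
      rw [← Finset.sum_sub_distrib]
      refine (Finset.sum_subset (Finset.filter_subset _ _) ?_).symm
      intro α hα hnα
      simp only [Finset.mem_filter, not_and, not_or, not_not] at hnα
      obtain ⟨h1, h2⟩ := hnα hα
      rw [h1, h2]
      ring
    have hcard : T.card ≤ 2 := by
      have h1 : T ⊆ a.support.filter (fun α => f α z ≠ 0) ∪
          a.support.filter (fun α => f α w ≠ 0) := by
        rw [hT, ← Finset.filter_or]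
      have h2 : (a.support.filter (fun α => f α z ≠ 0)).card ≤ 1 := Finset.card_le_one.2 (by
        intro α hα β hβ
        exact hsub z α β (Finset.mem_filter.1 hα).2 (Finset.mem_filter.1 hβ).2)
      have h3 : (a.support.filter (fun α => f α w ≠ 0)).card ≤ 1 := Finset.card_le_one.2 (by
        intro α hα β hβ
        exact hsub w α β (Finset.mem_filter.1 hα).2 (Finset.mem_filter.1 hβ).2)
      calc T.card ≤ _ := Finset.card_le_card h1
        _ ≤ _ + _ := Finset.card_union_le _ _
        _ ≤ 2 := by omega
    have hterm : ∀ α ∈ T, |a α * f α z - a α * f α w| ≤ (Q : ℝ) * dist z w := by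
      intro α hα
      have hαs : α ∈ a.support := (Finset.mem_filter.1 hα).1
      have ha : |a α| ≤ (Q : ℝ) := by
        have := Finset.le_sup (f := fun α => ‖a α‖₊) hαs
        rw [← hQ] at this
        calc |a α| = ((‖a α‖₊ : ℝ)) := by rw [coe_nnnorm, Real.norm_eq_abs]
          _ ≤ (Q : ℝ) := NNReal.coe_le_coe.2 this
      have hfd : |f α z - f α w| ≤ dist z w := by
        have := (hlip α).dist_le_mul z w
        rw [Real.dist_eq, NNReal.coe_one, one_mul] at this
        exact this
      calc |a α * f α z - a α * f α w| = |a α| * |f α z - f α w| := by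
            rw [← abs_mul]; ring_nf
        _ ≤ (Q : ℝ) * dist z w := by
            apply mul_le_mul ha hfd (abs_nonneg _) (NNReal.coe_nonneg _)
    rw [Real.dist_eq, hgzw]
    calc |∑ α ∈ T, (a α * f α z - a α * f α w)| ≤ ∑ α ∈ T, |a α * f α z - a α * f α w| :=
          Finset.abs_sum_le_sum_abs _ _
      _ ≤ ∑ _α ∈ T, (Q : ℝ) * dist z w := Finset.sum_le_sum hterm
      _ = (T.card : ℝ) * ((Q : ℝ) * dist z w) := by rw [Finset.sum_const, nsmul_eq_mul]
      _ ≤ 2 * ((Q : ℝ) * dist z w) := by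
          apply mul_le_mul_of_nonneg_right
          · exact_mod_cast hcard
          · positivity
      _ = ((2 * Q : ℝ≥0) : ℝ) * dist z w := by push_cast; ring
  · -- lower bound
    intro a L hL
    have key : ∀ α ∈ a.support, ‖a α‖₊ ≤ 2 * L := by
      intro α hα
      have h1 : (∑ β ∈ a.support, a β * f β (xp α)) = a α * s (xp α) := by
        rw [Finset.sum_eq_single α]
        · rw [hself]
        · intro β hβ hne
          rw [hother α β (fun h => hne h.symm), mul_zero]
        · intro h
          rw [Finsupp.notMem_support_iff.1 h]
          ring
      have h2 : (∑ β ∈ a.support, a β * f β (Y (xp α))) = 0 :=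
        Finset.sum_eq_zero (fun β _ => by rw [hYval α β, mul_zero])
      have h3 := hL.dist_le_mul (xp α) (Y (xp α))
      rw [h1, h2] at h3
      rw [Real.dist_eq, sub_zero, hYdist _ (hxpA α)] at h3
      have hspos' := hspos _ (hxpA α)
      have h6 : |a α| * s (xp α) ≤ (L : ℝ) * (2 * s (xp α)) := by
        rw [abs_mul, abs_of_pos hspos'] at h3
        exact h3
      have h7 : |a α| ≤ 2 * (L : ℝ) := by nlinarith
      rw [← NNReal.coe_le_coe]
      calc ((‖a α‖₊ : ℝ)) = |a α| := by rw [coe_nnnorm, Real.norm_eq_abs]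
        _ ≤ 2 * (L : ℝ) := h7
        _ = ((2 * L : ℝ≥0) : ℝ) := by push_cast; ring
    have hQle : (a.support.sup fun α => ‖a α‖₊) ≤ 2 * L := Finset.sup_le key
    calc (1/2 : ℝ≥0) * (a.support.sup fun α => ‖a α‖₊) ≤ (1/2 : ℝ≥0) * (2 * L) :=
          mul_le_mul' le_rfl hQle
      _ = L := by
          rw [← mul_assoc]
          norm_num
end

section
/- The map R defined on the closed first quadrant of the complex plane by R(z) = z²/|z| for z ≠ 0 and R(0) = 0 is a bi-Lipschitz bijection from the closed first quadrant {z ∈ ℂ : Re z ≥ 0, Im z ≥ 0} onto the closed upper half-plane {z ∈ ℂ : Im z ≥ 0}; more precisely, |R(z₀) − R(z₁)| ≤ 3|z₀ − z₁| for all z₀, z₁ in the closed first quadrant, and |R⁻¹(z₀) − R⁻¹(z₁)| ≤ 2|z₀ − z₁| for all z₀, z₁ in the closed upper half-plane. -/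
/-- The map `R(z) = z²/|z|` (with `R(0) = 0`, which holds automatically since
division by zero is zero). -/
noncomputable def Rmap (z : ℂ) : ℂ := z ^ 2 / ((‖z‖ : ℝ) : ℂ)

/-- The closed first quadrant of the complex plane. -/
def firstQuadrant : Set ℂ := {z : ℂ | 0 ≤ z.re ∧ 0 ≤ z.im}

/-- The closed upper half-plane. -/
def upperHalfPlane' : Set ℂ := {z : ℂ | 0 ≤ z.im}

lemma abs_Rmap (z : ℂ) : ‖Rmap z‖ = ‖z‖ := by
  rcases eq_or_ne z 0 with rfl | hz
  · simp [Rmap]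
  · have h : ‖z‖ ≠ 0 := by simpa using hz
    simp only [Rmap, norm_div, norm_pow, Complex.norm_real, Real.norm_eq_abs,
      abs_of_nonneg (norm_nonneg z)]
    field_simp

lemma Rmap_upper (z₀ z₁ : ℂ) :
    ‖Rmap z₀ - Rmap z₁‖ ≤ 3 * ‖z₀ - z₁‖ := by
  rcases eq_or_ne z₀ 0 with rfl | h₀
  · rw [show Rmap 0 = 0 by simp [Rmap], zero_sub, zero_sub, norm_neg, norm_neg,
      abs_Rmap]
    nlinarith [norm_nonneg z₁]
  rcases eq_or_ne z₁ 0 with rfl | h₁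
  · rw [show Rmap 0 = 0 by simp [Rmap], sub_zero, sub_zero, abs_Rmap]
    nlinarith [norm_nonneg z₀]
  set a : ℝ := ‖z₀‖ with ha
  set b : ℝ := ‖z₁‖ with hb
  have ha0 : a ≠ 0 := by simpa [ha] using h₀
  have hb0 : b ≠ 0 := by simpa [hb] using h₁
  have haN : 0 ≤ a := norm_nonneg z₀
  have hbN : 0 ≤ b := norm_nonneg z₁
  have haC : (a:ℂ) ≠ 0 := by exact_mod_cast ha0
  have hbC : (b:ℂ) ≠ 0 := by exact_mod_cast hb0
  set u : ℂ := z₀ / a with hu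
  set v : ℂ := z₁ / b with hv
  have hUabs : ‖u‖ = 1 := by
    simp [hu, norm_div, ← ha, abs_of_nonneg haN, div_self ha0]
  have hVabs : ‖v‖ = 1 := by
    simp [hv, norm_div, ← hb, abs_of_nonneg hbN, div_self hb0]
  have key : Rmap z₀ - Rmap z₁ = (z₀ - z₁) * (u + v) - ((a - b : ℝ) : ℂ) * (u * v) := by
    simp only [Rmap, hu, hv, ← ha, ← hb, Complex.ofReal_sub]
    field_simp
    ring
  calc ‖Rmap z₀ - Rmap z₁‖
      ≤ ‖(z₀ - z₁) * (u + v)‖ + ‖((a - b : ℝ) : ℂ) * (u * v)‖ := by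
        rw [key]; exact norm_sub_le _ _
    _ ≤ ‖z₀ - z₁‖ * 2 + |a - b| * (1 * 1) := by
        rw [norm_mul, norm_mul, Complex.norm_real, Real.norm_eq_abs, norm_mul, hUabs, hVabs]
        gcongr
        calc ‖u + v‖ ≤ ‖u‖ + ‖v‖ := norm_add_le _ _
          _ = 2 := by rw [hUabs, hVabs]; norm_num
    _ ≤ ‖z₀ - z₁‖ * 2 + ‖z₀ - z₁‖ * (1 * 1) := by
        gcongr
        simpa [ha, hb] using abs_norm_sub_norm_le z₀ z₁
    _ = 3 * ‖z₀ - z₁‖ := by ring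

lemma Rmap_lower (z₀ z₁ : ℂ) (h₀ : z₀ ∈ firstQuadrant) (h₁ : z₁ ∈ firstQuadrant) :
    ‖z₀ - z₁‖ ≤ 2 * ‖Rmap z₀ - Rmap z₁‖ := by
  rcases eq_or_ne z₀ 0 with rfl | hz₀
  · rw [show Rmap 0 = 0 by simp [Rmap], zero_sub, zero_sub, norm_neg, norm_neg,
      abs_Rmap]
    nlinarith [norm_nonneg z₁]
  rcases eq_or_ne z₁ 0 with rfl | hz₁
  · rw [show Rmap 0 = 0 by simp [Rmap], sub_zero, sub_zero, abs_Rmap]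
    nlinarith [norm_nonneg z₀]
  set a : ℝ := ‖z₀‖ with ha
  set b : ℝ := ‖z₁‖ with hb
  have ha0 : a ≠ 0 := by simpa [ha] using hz₀
  have hb0 : b ≠ 0 := by simpa [hb] using hz₁
  have haN : 0 ≤ a := norm_nonneg z₀
  have hbN : 0 ≤ b := norm_nonneg z₁
  have haC : (a:ℂ) ≠ 0 := by exact_mod_cast ha0
  have hbC : (b:ℂ) ≠ 0 := by exact_mod_cast hb0
  set u : ℂ := z₀ / a with hu
  set v : ℂ := z₁ / b with hv
  set t : ℂ := u * (starRingEnd ℂ) v with ht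
  have hns_u : Complex.normSq u = 1 := by
    have : ‖u‖ = 1 := by simp [hu, norm_div, ← ha, abs_of_nonneg haN, div_self ha0]
    rw [← Complex.sq_norm, this]; norm_num
  have hns_v : Complex.normSq v = 1 := by
    have : ‖v‖ = 1 := by simp [hv, norm_div, ← hb, abs_of_nonneg hbN, div_self hb0]
    rw [← Complex.sq_norm, this]; norm_num
  have hns_t : Complex.normSq t = 1 := by
    rw [ht, Complex.normSq_mul, Complex.normSq_conj, hns_u, hns_v]; norm_num
  have hc1 : t.re ^ 2 + t.im ^ 2 = 1 := by
    have := hns_t; rw [Complex.normSq_apply] at this; nlinarith [this]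
  have hcre : 0 ≤ t.re := by
    have hre : t.re = u.re * v.re + u.im * v.im := by
      simp [ht, Complex.mul_re, Complex.conj_re, Complex.conj_im]
    have hu_re : 0 ≤ u.re := by
      rw [hu]; simp [Complex.div_ofReal_re]
      exact div_nonneg h₀.1 haN
    have hu_im : 0 ≤ u.im := by
      rw [hu]; simp [Complex.div_ofReal_im]
      exact div_nonneg h₀.2 haN
    have hv_re : 0 ≤ v.re := by
      rw [hv]; simp [Complex.div_ofReal_re]
      exact div_nonneg h₁.1 hbN
    have hv_im : 0 ≤ v.im := by
      rw [hv]; simp [Complex.div_ofReal_im]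
      exact div_nonneg h₁.2 hbN
    rw [hre]; positivity
  -- normSq computations
  have hz₀u : z₀ = (a:ℂ) * u := by rw [hu]; field_simp
  have hz₁v : z₁ = (b:ℂ) * v := by rw [hv]; field_simp
  have hR₀ : Rmap z₀ = (a:ℂ) * u ^ 2 := by
    rw [Rmap, ← ha, hz₀u]; field_simp
  have hR₁ : Rmap z₁ = (b:ℂ) * v ^ 2 := by
    rw [Rmap, ← hb, hz₁v]; field_simp
  have hNS1 : Complex.normSq (z₀ - z₁) = a ^ 2 + b ^ 2 - 2 * (a * b * t.re) := by
    rw [Complex.normSq_sub, hz₀u, hz₁v]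
    rw [Complex.normSq_mul, Complex.normSq_mul, Complex.normSq_ofReal, Complex.normSq_ofReal,
      hns_u, hns_v]
    have : (a:ℂ) * u * (starRingEnd ℂ) ((b:ℂ) * v) = ((a * b : ℝ) : ℂ) * t := by
      rw [ht]; push_cast; rw [map_mul, Complex.conj_ofReal]; ring
    rw [this]
    simp [Complex.mul_re]
    ring
  have hNS2 : Complex.normSq (Rmap z₀ - Rmap z₁)
      = a ^ 2 + b ^ 2 - 2 * (a * b * (t.re ^ 2 - t.im ^ 2)) := by
    rw [Complex.normSq_sub, hR₀, hR₁]
    rw [Complex.normSq_mul, Complex.normSq_mul, Complex.normSq_ofReal, Complex.normSq_ofReal,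
      map_pow, map_pow, hns_u, hns_v]
    have : (a:ℂ) * u ^ 2 * (starRingEnd ℂ) ((b:ℂ) * v ^ 2) = ((a * b : ℝ) : ℂ) * t ^ 2 := by
      rw [ht]; push_cast; rw [map_mul, Complex.conj_ofReal, map_pow]; ring
    rw [this]
    have ht2 : (t ^ 2).re = t.re ^ 2 - t.im ^ 2 := by
      rw [sq, Complex.mul_re]; ring
    simp [Complex.mul_re, ht2]
    ring
  -- squared inequality
  have hsq : Complex.normSq (z₀ - z₁) ≤ 4 * Complex.normSq (Rmap z₀ - Rmap z₁) := by
    rw [hNS1, hNS2]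
    have hcle : t.re ≤ 1 := by nlinarith [sq_nonneg t.im]
    nlinarith [sq_nonneg (a - b), mul_nonneg (mul_nonneg (mul_nonneg haN hbN)
      (by linarith : (0:ℝ) ≤ 1 - t.re)) (by linarith : (0:ℝ) ≤ 7 + 8 * t.re)]
  have h1 : ‖z₀ - z₁‖ ^ 2 ≤ (2 * ‖Rmap z₀ - Rmap z₁‖) ^ 2 := by
    rw [Complex.sq_norm, mul_pow, Complex.sq_norm]; nlinarith [hsq]
  have h2 := Real.sqrt_le_sqrt h1
  rwa [Real.sqrt_sq (norm_nonneg _), Real.sqrt_sq (by positivity)] at h2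

lemma Rmap_im_nonneg (z : ℂ) (hz : z ∈ firstQuadrant) : 0 ≤ (Rmap z).im := by
  have h2 : (z ^ 2).im = 2 * z.re * z.im := by rw [sq, Complex.mul_im]; ring
  have : (Rmap z).im = (z ^ 2).im * (‖z‖) / Complex.normSq ((‖z‖ : ℝ) : ℂ) := by
    simp [Rmap, Complex.div_im]
  rw [this, h2]
  apply div_nonneg _ (Complex.normSq_nonneg _)
  have := hz.1; have := hz.2
  positivity

lemma Rmap_surj_aux (w : ℂ) (hw : 0 ≤ w.im) : ∃ z ∈ firstQuadrant, Rmap z = w := by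
  rcases eq_or_ne w 0 with rfl | hw0
  · exact ⟨0, ⟨le_refl 0, le_refl 0⟩, by simp [Rmap]⟩
  set r : ℝ := ‖w‖ with hr
  have hr0 : 0 < r := by simpa [hr] using norm_pos_iff.mpr hw0
  have hre : |w.re| ≤ r := Complex.abs_re_le_norm w
  have hre1 : 0 ≤ r + w.re := by have := abs_le.mp hre; linarith [this.1]
  have hre2 : 0 ≤ r - w.re := by have := abs_le.mp hre; linarith [this.2]
  set x : ℝ := Real.sqrt (r * (r + w.re) / 2) with hx
  set y : ℝ := Real.sqrt (r * (r - w.re) / 2) with hy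
  have hx0 : 0 ≤ x := Real.sqrt_nonneg _
  have hy0 : 0 ≤ y := Real.sqrt_nonneg _
  have hx2 : x ^ 2 = r * (r + w.re) / 2 := Real.sq_sqrt (by positivity)
  have hy2 : y ^ 2 = r * (r - w.re) / 2 := Real.sq_sqrt (by nlinarith)
  have hr2 : r ^ 2 = w.re ^ 2 + w.im ^ 2 := by
    rw [hr, Complex.sq_norm, Complex.normSq_apply]; ring
  have hxy : x * y = r * w.im / 2 := by
    have hsq : (x * y) ^ 2 = (r * w.im / 2) ^ 2 := by
      rw [mul_pow, hx2, hy2]; linear_combination (r ^ 2 / 4) * hr2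
    have h1 : x * y = Real.sqrt ((x * y) ^ 2) := (Real.sqrt_sq (by positivity)).symm
    rw [h1, hsq, Real.sqrt_sq (by positivity)]
  set z : ℂ := ⟨x, y⟩ with hz
  have hzre : z.re = x := rfl
  have hzim : z.im = y := rfl
  have hnsz : Complex.normSq z = r ^ 2 := by
    rw [Complex.normSq_apply, hzre, hzim]
    nlinarith [hx2, hy2]
  have habs : ‖z‖ = r := by
    rw [Complex.norm_def, hnsz, Real.sqrt_sq hr0.le]
  have hz2 : z ^ 2 = w * (r : ℂ) := by
    apply Complex.ext
    · rw [sq, Complex.mul_re, hzre, hzim, Complex.mul_re, Complex.ofReal_re, Complex.ofReal_im]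
      nlinarith [hx2, hy2]
    · rw [sq, Complex.mul_im, hzre, hzim, Complex.mul_im, Complex.ofReal_re, Complex.ofReal_im]
      rw [show x * y + y * x = 2 * (x * y) by ring, hxy]
      ring
  refine ⟨z, ⟨by rw [hzre]; exact hx0, by rw [hzim]; exact hy0⟩, ?_⟩
  rw [Rmap, habs, hz2]
  exact mul_div_cancel_right₀ w (by exact_mod_cast hr0.ne')

/-- `R(z) = z²/|z|` is a bijection from the closed first quadrant onto the
closed upper half-plane; it is `3`-Lipschitz, and its inverse is `2`-Lipschitz. -/
theorem stmt_8 :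
    Set.BijOn Rmap firstQuadrant upperHalfPlane' ∧
    (∀ z₀ ∈ firstQuadrant, ∀ z₁ ∈ firstQuadrant,
      ‖Rmap z₀ - Rmap z₁‖ ≤ 3 * ‖z₀ - z₁‖) ∧
    (∀ w₀ ∈ upperHalfPlane', ∀ w₁ ∈ upperHalfPlane',
      ‖Function.invFunOn Rmap firstQuadrant w₀ -
          Function.invFunOn Rmap firstQuadrant w₁‖ ≤ 2 * ‖w₀ - w₁‖) := by
  have hbij : Set.BijOn Rmap firstQuadrant upperHalfPlane' := by
    refine ⟨fun z hz => Rmap_im_nonneg z hz, ?_, ?_⟩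
    · intro p hp q hq hpq
      have h := Rmap_lower p q hp hq
      rw [hpq, sub_self, norm_zero, mul_zero] at h
      have := norm_nonneg (p - q)
      have h0 : ‖p - q‖ = 0 := le_antisymm h this
      exact sub_eq_zero.mp (norm_eq_zero.mp h0)
    · intro w hw
      obtain ⟨z, hz, hzw⟩ := Rmap_surj_aux w hw
      exact ⟨z, hz, hzw⟩
  refine ⟨hbij, fun z₀ _ z₁ _ => Rmap_upper z₀ z₁, ?_⟩
  intro w₀ hw₀ w₁ hw₁
  have h₀ex : ∃ a ∈ firstQuadrant, Rmap a = w₀ := Rmap_surj_aux w₀ hw₀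
  have h₁ex : ∃ a ∈ firstQuadrant, Rmap a = w₁ := Rmap_surj_aux w₁ hw₁
  have hm₀ := Function.invFunOn_mem h₀ex
  have hm₁ := Function.invFunOn_mem h₁ex
  have he₀ := Function.invFunOn_eq h₀ex
  have he₁ := Function.invFunOn_eq h₁ex
  have := Rmap_lower _ _ hm₀ hm₁
  rwa [he₀, he₁] at this
end

section
/- Let X be a Banach space which is an absolute Lipschitz retract, and let N be a net in X. Then N is an absolute uniformly discrete Lipschitz retract. Conversely, if some net N in X is an absolute uniformly discrete Lipschitz retract and X is a Lipschitz retract of its bidual X**, then X is an absolute Lipschitz retract. -/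
open scoped NNReal ENNReal

/-- A metric space `X` is an absolute Lipschitz retract: for some `K`, every metric
superspace of `X` (i.e. every isometric embedding `i : X → Y`) admits a `K`-Lipschitz
retraction onto (the copy of) `X`. -/
def IsAbsoluteLipschitzRetract (X : Type*) [MetricSpace X] : Prop :=
  ∃ K : ℝ≥0, ∀ (Y : Type*) [MetricSpace Y] (i : X → Y), Isometry i →
    ∃ r : Y → X, LipschitzWith K r ∧ ∀ x : X, r (i x) = x

/-- A `δ`-uniformly discrete metric space `X` is an absolute uniformly discrete Lipschitz
retract: for some `K`, it is a `K`-Lipschitz retract of every `δ`-uniformly discrete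
metric superspace. -/
def IsAbsUnifDiscLipschitzRetract (X : Type*) [MetricSpace X] (δ : ℝ) : Prop :=
  ∃ K : ℝ≥0, ∀ (Y : Type*) [MetricSpace Y] (i : X → Y), Isometry i →
    (∀ y z : Y, y ≠ z → δ ≤ dist y z) →
    ∃ r : Y → X, LipschitzWith K r ∧ ∀ x : X, r (i x) = x

structure Scaled (Z : Type*) where
  down : Z

noncomputable def scaledMetric (Z : Type*) [MetricSpace Z] (c : ℝ) (hc : 0 < c) :
    MetricSpace (Scaled Z) where
  dist x y := c * dist x.down y.down
  dist_self x := by show c * dist _ _ = 0; simp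
  dist_comm x y := by show c * _ = c * _; rw [dist_comm]
  dist_triangle x y z := by
    show c * _ ≤ c * _ + c * _
    rw [← mul_add]
    exact mul_le_mul_of_nonneg_left (dist_triangle _ _ _) hc.le
  eq_of_dist_eq_zero {x y} h := by
    have h' : c * dist x.down y.down = 0 := h
    have h2 : dist x.down y.down = 0 := by
      rcases mul_eq_zero.1 h' with h | h
      · exact absurd h hc.ne'
      · exact h
    have h3 : x.down = y.down := eq_of_dist_eq_zero h2
    cases x; cases y; cases h3; rfl

theorem scaled_dist_eq {Z : Type*} [MetricSpace Z] {c : ℝ} (hc : 0 < c) (x y : Scaled Z) :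
    @dist _ (scaledMetric Z c hc).toDist x y = c * dist x.down y.down := rfl

theorem exists_maximal_sep {Y : Type*} [MetricSpace Y] {ε : ℝ} (hε : 0 < ε) (S : Set Y)
    (hS : ∀ y ∈ S, ∀ z ∈ S, y ≠ z → ε ≤ dist y z) :
    ∃ M : Set Y, S ⊆ M ∧ (∀ y ∈ M, ∀ z ∈ M, y ≠ z → ε ≤ dist y z) ∧
      ∀ y : Y, ∃ m ∈ M, dist y m < ε := by
  set C : Set (Set Y) := {T | ∀ y ∈ T, ∀ z ∈ T, y ≠ z → ε ≤ dist y z} with hC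
  have hchains : ∀ c ⊆ C, IsChain (· ⊆ ·) c → c.Nonempty → ∃ ub ∈ C, ∀ s ∈ c, s ⊆ ub := by
    intro c hcC hchain _
    refine ⟨⋃₀ c, ?_, fun s hs => Set.subset_sUnion_of_mem hs⟩
    intro y hy z hz hyz
    obtain ⟨s, hsc, hys⟩ := hy
    obtain ⟨t, htc, hzt⟩ := hz
    rcases hchain.total hsc htc with hst | hts
    · exact hcC htc y (hst hys) z hzt hyz
    · exact hcC hsc y hys z (hts hzt) hyz
  obtain ⟨M, hSM, hMC, hMax⟩ := zorn_subset_nonempty C hchains S hS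
  refine ⟨M, hSM, hMC, fun y => ?_⟩
  by_contra h
  push_neg at h
  have hyM : y ∉ M := fun hy => absurd (h y hy) (by simp [hε])
  have hins : insert y M ∈ C := by
    intro u hu v hv huv
    rcases hu with rfl | hu
    · rcases hv with rfl | hv
      · exact absurd rfl huv
      · exact h v hv
    · rcases hv with rfl | hv
      · rw [dist_comm]; exact h u hu
      · exact hMC u hu v hv huv
  exact hyM (hMax hins (Set.subset_insert y M) (Set.mem_insert y M))

/-- Kuratowski-type map from a superspace `Y` of `X` into bounded continuous functions. -/
noncomputable def kurMap {X : Type} [MetricSpace X] {Y : Type*} [MetricSpace Y] {i : X → Y}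
    (hi : Isometry i) (x₀ : X) (y : Y) : BoundedContinuousFunction X ℝ :=
  ⟨⟨fun x => dist y (i x) - dist (i x) (i x₀), by
      refine Continuous.sub ?_ ?_
      · exact (continuous_const.dist hi.continuous)
      · exact (hi.continuous.dist continuous_const)⟩,
    2 * dist y (i x₀), by
      intro x x'
      have hb : ∀ x : X, |dist y (i x) - dist (i x) (i x₀)| ≤ dist y (i x₀) := by
        intro x
        rw [abs_le]
        constructor
        · have := dist_triangle (i x) y (i x₀)
          rw [dist_comm (i x) y] at this
          linarith
        · have := dist_triangle y (i x₀) (i x)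
          rw [dist_comm (i x₀) (i x)] at this
          linarith
      calc dist (dist y (i x) - dist (i x) (i x₀)) (dist y (i x') - dist (i x') (i x₀))
          ≤ |dist y (i x) - dist (i x) (i x₀)| + |dist y (i x') - dist (i x') (i x₀)| := by
            rw [Real.dist_eq]
            exact (abs_sub _ _).trans (by rfl)
        _ ≤ 2 * dist y (i x₀) := by have := hb x; have := hb x'; linarith⟩

theorem kurMap_apply {X : Type} [MetricSpace X] {Y : Type*} [MetricSpace Y] {i : X → Y}
    (hi : Isometry i) (x₀ : X) (y : Y) (x : X) :
    kurMap hi x₀ y x = dist y (i x) - dist (i x) (i x₀) := rfl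

theorem kurMap_lip {X : Type} [MetricSpace X] {Y : Type*} [MetricSpace Y] {i : X → Y}
    (hi : Isometry i) (x₀ : X) (y z : Y) :
    dist (kurMap hi x₀ y) (kurMap hi x₀ z) ≤ dist y z := by
  rw [BoundedContinuousFunction.dist_le dist_nonneg]
  intro x
  rw [kurMap_apply, kurMap_apply, Real.dist_eq]
  have : dist y (i x) - dist (i x) (i x₀) - (dist z (i x) - dist (i x) (i x₀))
      = dist y (i x) - dist z (i x) := by ring
  rw [this]
  exact abs_dist_sub_le _ _ _

theorem kurMap_comp_emb {X : Type} [MetricSpace X] {Y : Type*} [MetricSpace Y] {i : X → Y}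
    (hi : Isometry i) (x₀ : X) (x : X) :
    kurMap hi x₀ (i x) = kurMap (isometry_id (α := X)) x₀ x := by
  ext x'
  rw [kurMap_apply, kurMap_apply]
  simp [hi.dist_eq]

theorem kurMap_id_isometry {X : Type} [MetricSpace X] (x₀ : X) :
    Isometry (kurMap (isometry_id (α := X)) x₀) := by
  refine Isometry.of_dist_eq fun x x' => ?_
  refine le_antisymm (kurMap_lip _ _ _ _) ?_
  have h := BoundedContinuousFunction.dist_coe_le_dist (f := kurMap (isometry_id (α := X)) x₀ x)
    (g := kurMap (isometry_id (α := X)) x₀ x') x'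
  rw [kurMap_apply, kurMap_apply] at h
  simp only [id_eq] at h
  rw [Real.dist_eq] at h
  have : dist x x' - dist x' x₀ - (dist x' x' - dist x' x₀) = dist x x' := by rw [dist_self]; ring
  rw [this] at h
  rwa [abs_of_nonneg dist_nonneg] at h

theorem alr_transfer {X : Type} [MetricSpace X] [Nonempty X]
    (h : IsAbsoluteLipschitzRetract.{0, u₁} X) : IsAbsoluteLipschitzRetract.{0, u₂} X := by
  obtain ⟨K, hK⟩ := h
  set x₀ : X := Classical.arbitrary X
  set κ : X → BoundedContinuousFunction X ℝ := kurMap (isometry_id (α := X)) x₀ with hκ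
  have hup : Isometry (ULift.up.{u₁} : BoundedContinuousFunction X ℝ → _) :=
    Isometry.of_dist_eq fun _ _ => rfl
  obtain ⟨ρ, hρ, hρx⟩ := hK (ULift.{u₁} (BoundedContinuousFunction X ℝ))
    (fun x => ULift.up (κ x)) (hup.comp (kurMap_id_isometry x₀))
  refine ⟨K, fun Y _ i hi => ?_⟩
  refine ⟨fun y => ρ (ULift.up (kurMap hi x₀ y)), ?_, ?_⟩
  · refine LipschitzWith.of_dist_le_mul fun y z => ?_
    calc dist (ρ (ULift.up (kurMap hi x₀ y))) (ρ (ULift.up (kurMap hi x₀ z)))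
        ≤ K * dist (ULift.up (kurMap hi x₀ y)) (ULift.up (kurMap hi x₀ z)) := hρ.dist_le_mul _ _
      _ = K * dist (kurMap hi x₀ y) (kurMap hi x₀ z) := by rw [hup.dist_eq]
      _ ≤ K * dist y z := by
          exact mul_le_mul_of_nonneg_left (kurMap_lip hi x₀ y z) K.coe_nonneg
  · intro x
    show ρ (ULift.up (kurMap hi x₀ (i x))) = x
    rw [kurMap_comp_emb hi x₀ x, ← hκ]
    exact hρx x

open Classical in
/-- Truncated distance. -/
noncomputable def ddist {A : Type*} {B : Type*} [MetricSpace B] (p : A → B) (δ : ℝ)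
    (u v : A) : ℝ :=
  if u = v then 0 else max (dist (p u) (p v)) δ

theorem ddist_self {A B : Type*} [MetricSpace B] (p : A → B) (δ : ℝ) (u : A) :
    ddist p δ u u = 0 := if_pos rfl

theorem ddist_of_ne {A B : Type*} [MetricSpace B] (p : A → B) (δ : ℝ) {u v : A} (h : u ≠ v) :
    ddist p δ u v = max (dist (p u) (p v)) δ := if_neg h

theorem ddist_comm {A B : Type*} [MetricSpace B] (p : A → B) (δ : ℝ) (u v : A) :
    ddist p δ u v = ddist p δ v u := by
  by_cases h : u = v
  · subst h; rfl
  · rw [ddist_of_ne p δ h, ddist_of_ne p δ (Ne.symm h), dist_comm]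

theorem ddist_nonneg' {A B : Type*} [MetricSpace B] (p : A → B) {δ : ℝ} (hδ : 0 < δ) (u v : A) :
    0 ≤ ddist p δ u v := by
  by_cases h : u = v
  · subst h; rw [ddist_self]
  · rw [ddist_of_ne p δ h]; exact le_max_of_le_right hδ.le

theorem ddist_triangle {A B : Type*} [MetricSpace B] (p : A → B) {δ : ℝ} (hδ : 0 < δ)
    (u v w : A) : ddist p δ u w ≤ ddist p δ u v + ddist p δ v w := by
  by_cases huv : u = v
  · subst huv; rw [ddist_self]; simp
  · by_cases hvw : v = w
    · subst hvw; rw [ddist_self]; simp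
    · by_cases huw : u = w
      · subst huw
        rw [ddist_self]
        exact add_nonneg (ddist_nonneg' p hδ _ _) (ddist_nonneg' p hδ _ _)
      · rw [ddist_of_ne p δ huv, ddist_of_ne p δ hvw, ddist_of_ne p δ huw]
        have h1 : dist (p u) (p w) ≤ max (dist (p u) (p v)) δ + max (dist (p v) (p w)) δ :=
          (dist_triangle _ _ _).trans (add_le_add (le_max_left _ _) (le_max_left _ _))
        have h2 : δ ≤ max (dist (p u) (p v)) δ + max (dist (p v) (p w)) δ :=
          le_add_of_le_of_nonneg (le_max_right _ _) (le_max_of_le_right hδ.le)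
        exact max_le h1 h2

/-- Metric obtained from a map `p : A → B` by truncating distances below `δ`. -/
noncomputable def discMetric (A : Type*) {B : Type*} [MetricSpace B] (p : A → B) {δ : ℝ}
    (hδ : 0 < δ) : MetricSpace A where
  dist := ddist p δ
  dist_self := ddist_self p δ
  dist_comm := ddist_comm p δ
  dist_triangle := ddist_triangle p hδ
  eq_of_dist_eq_zero := fun {u v} h => by
    by_contra hne
    have h' : ddist p δ u v = 0 := h
    rw [ddist_of_ne p δ hne] at h'
    have h := h'
    have : δ ≤ (0:ℝ) := h ▸ le_max_right _ _
    linarith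

theorem discMetric_dist {A : Type*} {B : Type*} [MetricSpace B] (p : A → B) {δ : ℝ}
    (hδ : 0 < δ) (u v : A) :
    @dist _ (discMetric A p hδ).toDist u v = ddist p δ u v := rfl

theorem audlr_transfer {M : Type} [MetricSpace M] [Nonempty M] {δ : ℝ} (hδ : 0 < δ)
    (hsep : ∀ x y : M, x ≠ y → δ ≤ dist x y)
    (h : IsAbsUnifDiscLipschitzRetract.{0, u₁} M δ) :
    IsAbsUnifDiscLipschitzRetract.{0, u₂} M δ := by
  obtain ⟨K, hK⟩ := h
  set m₀ : M := Classical.arbitrary M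
  set κ : M → BoundedContinuousFunction M ℝ := kurMap (isometry_id (α := M)) m₀ with hκ
  set U : Type := M ⊕ BoundedContinuousFunction M ℝ with hU
  set p : U → BoundedContinuousFunction M ℝ := Sum.elim κ id with hp
  letI instU : MetricSpace U := discMetric U p hδ
  have hUdist : ∀ u v : U, dist u v = ddist p δ u v := fun _ _ => rfl
  have hemb : Isometry (fun m : M => ULift.up.{u₁} (Sum.inl m : U)) := by
    refine Isometry.of_dist_eq fun m m' => ?_
    show ddist p δ (Sum.inl m : U) (Sum.inl m') = dist m m'
    by_cases hmm : m = m'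
    · subst hmm; rw [ddist_self, dist_self]
    · rw [ddist_of_ne p δ (fun he => hmm (Sum.inl.inj he))]
      have hκd : dist (p (Sum.inl m)) (p (Sum.inl m')) = dist m m' :=
        (kurMap_id_isometry m₀).dist_eq m m'
      rw [hκd, max_eq_left (hsep m m' hmm)]
  have hdisc : ∀ u v : ULift.{u₁} U, u ≠ v → δ ≤ dist u v := by
    intro u v huv
    have hne : u.down ≠ v.down := fun hd => huv (by cases u; cases v; simpa using hd)
    show δ ≤ ddist p δ u.down v.down
    rw [ddist_of_ne p δ hne]
    exact le_max_right _ _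
  obtain ⟨ρ, hρ, hρm⟩ := hK (ULift.{u₁} U) _ hemb hdisc
  refine ⟨K, fun Y _ i hi hYd => ?_⟩
  classical
  set j : Y → U := fun y => if hy : ∃ m, i m = y then Sum.inl hy.choose
    else Sum.inr (kurMap hi m₀ y) with hj
  have hji : ∀ m : M, j (i m) = Sum.inl m := by
    intro m
    have hy : ∃ m', i m' = i m := ⟨m, rfl⟩
    rw [hj]
    simp only [dif_pos hy]
    exact congrArg _ (hi.injective hy.choose_spec)
  have hpj : ∀ y : Y, p (j y) = kurMap hi m₀ y := by
    intro y
    rw [hj]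
    by_cases hy : ∃ m, i m = y
    · simp only [dif_pos hy]
      show κ hy.choose = _
      rw [hκ, ← kurMap_comp_emb hi m₀ hy.choose, hy.choose_spec]
    · simp only [dif_neg hy]
      rfl
  have hjlip : ∀ y z : Y, ddist p δ (j y) (j z) ≤ dist y z := by
    intro y z
    by_cases hyz : y = z
    · subst hyz; rw [ddist_self]; exact dist_nonneg
    · by_cases hjj : j y = j z
      · rw [hjj, ddist_self]; exact dist_nonneg
      · rw [ddist_of_ne p δ hjj, hpj, hpj]
        exact max_le (kurMap_lip hi m₀ y z) (hYd y z hyz)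
  refine ⟨fun y => ρ (ULift.up (j y)), ?_, ?_⟩
  · refine LipschitzWith.of_dist_le_mul fun y z => ?_
    calc dist (ρ (ULift.up (j y))) (ρ (ULift.up (j z)))
        ≤ K * dist (ULift.up.{u₁} (j y)) (ULift.up.{u₁} (j z)) := hρ.dist_le_mul _ _
      _ = K * ddist p δ (j y) (j z) := rfl
      _ ≤ K * dist y z := mul_le_mul_of_nonneg_left (hjlip y z) K.coe_nonneg
  · intro m
    show ρ (ULift.up (j (i m))) = m
    rw [hji m]
    exact hρm m

theorem part1_aux (X : Type) [NormedAddCommGroup X] [NormedSpace ℝ X] [CompleteSpace X] :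
    IsAbsoluteLipschitzRetract.{0, u₁} X →
      ∀ N : Set X, IsNet N → ∀ δ : ℝ, 0 < δ →
        (∀ x ∈ N, ∀ y ∈ N, x ≠ y → δ ≤ dist x y) →
        IsAbsUnifDiscLipschitzRetract.{0, u₂} ↥N δ := by
  intro halr N hNet δ hδ _hsep
  obtain ⟨a, b, _ha, hb, _hsepN, hdense⟩ := hNet
  have hp : ∀ x : X, ∃ q : ↥N, dist x q.val < b ∧ (x ∈ N → q.val = x) := by
    intro x
    by_cases hx : x ∈ N
    · exact ⟨⟨x, hx⟩, by simpa using hb, fun _ => rfl⟩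
    · obtain ⟨q, hqN, hq⟩ := EMetric.infEdist_lt_iff.1 (hdense x)
      exact ⟨⟨q, hqN⟩, by rwa [← edist_lt_ofReal], fun hx' => absurd hx' hx⟩
  choose p hp1 hp2 using hp
  have hNne : Nonempty ↥N := ⟨p 0⟩
  have hXne : Nonempty X := ⟨0⟩
  obtain ⟨K, hK⟩ := alr_transfer.{u₁, u₂} halr
  refine ⟨K + Real.toNNReal (2 * b / δ), ?_⟩
  intro Y _ i hi hYdisc
  have hΦ : Isometry (Subtype.val : ↥N → X) := isometry_subtype_coe
  obtain ⟨ρ, hρlip, hρret⟩ := hK (Metric.GlueSpace hΦ hi) (Metric.toGlueL hΦ hi)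
    (Metric.toGlueL_isometry hΦ hi)
  set g : Y → X := fun y => ρ (Metric.toGlueR hΦ hi y) with hgdef
  have hglip : ∀ y z : Y, dist (g y) (g z) ≤ K * dist y z := by
    intro y z
    have := ((hρlip.comp (Metric.toGlueR_isometry hΦ hi).lipschitz)).dist_le_mul y z
    simpa using this
  have hg : ∀ n : ↥N, g (i n) = n.val := by
    intro n
    have hc := congrFun (Metric.toGlue_commute hΦ hi) n
    simp only [Function.comp] at hc
    rw [hgdef]
    simp only [← hc, hρret]
  refine ⟨fun y => p (g y), ?_, ?_⟩
  · apply LipschitzWith.of_dist_le_mul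
    intro y z
    by_cases hyz : y = z
    · subst hyz; simpa using mul_nonneg (by positivity) dist_nonneg
    have hd : δ ≤ dist y z := hYdisc y z hyz
    have hcoe : ((K + Real.toNNReal (2 * b / δ) : ℝ≥0) : ℝ) = (K : ℝ) + 2 * b / δ := by
      push_cast [Real.coe_toNNReal _ (by positivity : (0:ℝ) ≤ 2 * b / δ)]
      ring
    rw [hcoe, Subtype.dist_eq]
    have h1 : dist ((p (g y)).val) ((p (g z)).val) ≤
        dist ((p (g y)).val) (g y) + dist (g y) (g z) + dist (g z) ((p (g z)).val) :=
      dist_triangle4 _ _ _ _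
    have h2 : dist ((p (g y)).val) (g y) ≤ b := by rw [dist_comm]; exact (hp1 (g y)).le
    have h3 : dist (g z) ((p (g z)).val) ≤ b := (hp1 (g z)).le
    have h4 : 2 * b ≤ (2 * b / δ) * dist y z := by
      rw [div_mul_eq_mul_div, le_div_iff₀ hδ]
      exact mul_le_mul_of_nonneg_left hd (by positivity)
    calc dist ((p (g y)).val) ((p (g z)).val)
        ≤ b + K * dist y z + b := by
          refine h1.trans (add_le_add (add_le_add h2 (hglip y z)) h3)
      _ = K * dist y z + 2 * b := by ring
      _ ≤ K * dist y z + (2 * b / δ) * dist y z := by linarith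
      _ = ((K : ℝ) + 2 * b / δ) * dist y z := by ring
  · intro x
    show p (g (i x)) = x
    rw [hg x]
    exact Subtype.ext (hp2 (x : X) x.2)


set_option maxHeartbeats 1000000 in
theorem part2_aux (X : Type) [NormedAddCommGroup X] [NormedSpace ℝ X] [CompleteSpace X]
    (N : Set X) (hNet : IsNet N) (δ : ℝ) (hδ : 0 < δ)
    (hsep : ∀ x ∈ N, ∀ y ∈ N, x ≠ y → δ ≤ dist x y)
    (haudlr : IsAbsUnifDiscLipschitzRetract.{0, u₁} ↥N δ)
    (K₀ : ℝ≥0) (ρ : StrongDual ℝ (StrongDual ℝ X) → X)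
    (hρ : LipschitzWith K₀ ρ) (hρJ : ∀ x : X, ρ (NormedSpace.inclusionInDoubleDual ℝ X x) = x) :
    IsAbsoluteLipschitzRetract.{0, u₂} X := by
  classical
  obtain ⟨a, b, _ha, hb, _hsepN, hdense⟩ := hNet
  -- nearest-net-point choice
  have hq' : ∀ v : X, ∃ p : ↥N, dist v p.val < b := by
    intro v
    obtain ⟨q, hqN, hqd⟩ := EMetric.infEdist_lt_iff.1 (hdense v)
    exact ⟨⟨q, hqN⟩, by rwa [← edist_lt_ofReal]⟩
  choose q hq using hq'
  haveI hNne : Nonempty ↥N := ⟨q 0⟩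
  have hsep' : ∀ x y : ↥N, x ≠ y → δ ≤ dist x y := by
    intro x y hxy
    rw [Subtype.dist_eq]
    exact hsep x.val x.2 y.val y.2 (fun h => hxy (Subtype.ext h))
  obtain ⟨K, hK⟩ := audlr_transfer.{u₁, u₂} hδ hsep' haudlr
  refine ⟨K₀ * K, ?_⟩
  intro Y _ i hi
  set c : ℕ → ℝ := fun n => (n : ℝ) + 1 with hc
  have hcn : ∀ n, (0:ℝ) < c n := fun n => by positivity
  have hcn1 : ∀ n, (1:ℝ) ≤ c n := fun n => by
    simp only [hc, le_add_iff_nonneg_left, Nat.cast_nonneg]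
  -- the scaled copies of N inside Y
  set S : ℕ → Set Y := fun n => i '' ((fun x : X => (c n)⁻¹ • x) '' N) with hS
  have hSsep : ∀ n, ∀ u ∈ S n, ∀ v ∈ S n, u ≠ v → δ / c n ≤ dist u v := by
    intro n u hu v hv huv
    obtain ⟨u', ⟨x, hx, rfl⟩, rfl⟩ := hu
    obtain ⟨v', ⟨x', hx', rfl⟩, rfl⟩ := hv
    have hxx : x ≠ x' := by rintro rfl; exact huv rfl
    rw [hi.dist_eq, dist_eq_norm, ← smul_sub, norm_smul, Real.norm_eq_abs,
      abs_of_nonneg (inv_nonneg.2 (hcn n).le), div_eq_inv_mul]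
    refine mul_le_mul_of_nonneg_left ?_ (inv_nonneg.2 (hcn n).le)
    rw [← dist_eq_norm]
    exact hsep x hx x' hx' hxx
  have hMex : ∀ n : ℕ, ∃ M : Set Y, S n ⊆ M ∧
      (∀ u ∈ M, ∀ v ∈ M, u ≠ v → δ / c n ≤ dist u v) ∧
      ∀ y : Y, ∃ m ∈ M, dist y m < δ / c n := fun n =>
    exists_maximal_sep (div_pos hδ (hcn n)) (S n) (hSsep n)
  choose M hSM hMsep hMnear using hMex
  -- embeddings of N into M n
  have hmem : ∀ (n : ℕ) (x : ↥N), i ((c n)⁻¹ • x.val) ∈ M n := fun n x =>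
    hSM n ⟨(c n)⁻¹ • x.val, ⟨x.val, x.2, rfl⟩, rfl⟩
  set e : ∀ n : ℕ, ↥N → ↥(M n) := fun n x => ⟨i ((c n)⁻¹ • x.val), hmem n x⟩ with he
  -- retractions on the scaled M n
  have hrex : ∀ n : ℕ, ∃ r : ↥(M n) → ↥N,
      (∀ u v : ↥(M n), dist (r u).val (r v).val ≤ K * (c n * dist u.val v.val)) ∧
      ∀ x : ↥N, r (e n x) = x := by
    intro n
    letI instS : MetricSpace (Scaled ↥(M n)) := scaledMetric (↥(M n)) (c n) (hcn n)
    have hiso : Isometry (fun x : ↥N => Scaled.mk (e n x)) := by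
      refine Isometry.of_dist_eq fun x x' => ?_
      rw [scaled_dist_eq (hcn n)]
      show c n * dist (e n x) (e n x') = dist x x'
      rw [Subtype.dist_eq, Subtype.dist_eq]
      show c n * dist (i ((c n)⁻¹ • x.val)) (i ((c n)⁻¹ • x'.val)) = dist x.val x'.val
      rw [hi.dist_eq, dist_eq_norm, ← smul_sub, norm_smul, Real.norm_eq_abs,
        abs_of_nonneg (inv_nonneg.2 (hcn n).le), ← dist_eq_norm]
      field_simp [(hcn n).ne']
    have hdisc : ∀ u v : Scaled ↥(M n), u ≠ v → δ ≤ dist u v := by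
      intro u v huv
      rw [scaled_dist_eq (hcn n)]
      have hne : u.down.val ≠ v.down.val := by
        intro h
        apply huv
        have h3 : u.down = v.down := Subtype.ext h
        cases u; cases v; cases h3; rfl
      have hs := hMsep n _ u.down.2 _ v.down.2 hne
      calc δ = c n * (δ / c n) := by field_simp [(hcn n).ne']
        _ ≤ c n * dist u.down.val v.down.val := mul_le_mul_of_nonneg_left hs (hcn n).le
        _ = c n * dist u.down v.down := by rw [Subtype.dist_eq]
    obtain ⟨r', hrlip', hre'⟩ := hK (Scaled ↥(M n)) _ hiso hdisc
    refine ⟨fun u => r' (Scaled.mk u), ?_, fun x => hre' x⟩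
    intro u v
    have hh := hrlip'.dist_le_mul (Scaled.mk u) (Scaled.mk v)
    rw [scaled_dist_eq (hcn n)] at hh
    calc dist (r' (Scaled.mk u)).val (r' (Scaled.mk v)).val
        = dist (r' (Scaled.mk u)) (r' (Scaled.mk v)) := (Subtype.dist_eq _ _).symm
      _ ≤ K * (c n * dist (Scaled.mk u).down (Scaled.mk v).down) := hh
      _ = K * (c n * dist u.val v.val) := by rw [Subtype.dist_eq]
  choose r hrlip hre using hrex
  -- nearest point maps
  have hmex : ∀ (n : ℕ) (y : Y), ∃ m : ↥(M n), dist y m.val < δ / c n := by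
    intro n y
    obtain ⟨m, hmM, hmd⟩ := hMnear n y
    exact ⟨⟨m, hmM⟩, hmd⟩
  choose m hm using hmex
  -- the approximating maps
  set f : ℕ → Y → X := fun n y => (c n)⁻¹ • ((r n (m n y)).val) with hf
  set C : ℝ := 2 * K * δ + (K * (δ + b) + b) with hCdef
  have hC : 0 ≤ C := by positivity
  have hsmul : ∀ (n : ℕ) (v w : X), ‖(c n)⁻¹ • v - (c n)⁻¹ • w‖ = (c n)⁻¹ * ‖v - w‖ := by
    intro n v w
    rw [← smul_sub, norm_smul, Real.norm_eq_abs, abs_of_nonneg (inv_nonneg.2 (hcn n).le)]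
  -- approximate Lipschitz estimate
  have hlip : ∀ (n : ℕ) (y z : Y), ‖f n y - f n z‖ ≤ K * dist y z + C / c n := by
    intro n y z
    rw [hf]
    show ‖(c n)⁻¹ • ((r n (m n y)).val) - (c n)⁻¹ • ((r n (m n z)).val)‖ ≤ _
    rw [hsmul n]
    have h1 : ‖(r n (m n y)).val - (r n (m n z)).val‖ ≤ K * (c n * dist (m n y).val (m n z).val) := by
      rw [← dist_eq_norm]; exact hrlip n _ _
    have h2 : dist (m n y).val (m n z).val ≤ dist y z + 2 * (δ / c n) := by
      calc dist (m n y).val (m n z).val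
          ≤ dist (m n y).val y + dist y z + dist z (m n z).val := dist_triangle4 _ _ _ _
        _ ≤ δ / c n + dist y z + δ / c n := by
            have h1' : dist (m n y).val y ≤ δ / c n := by
              rw [dist_comm]; exact (hm n y).le
            have h2' : dist z (m n z).val ≤ δ / c n := (hm n z).le
            exact add_le_add (add_le_add h1' le_rfl) h2' 
        _ = dist y z + 2 * (δ / c n) := by ring
    calc (c n)⁻¹ * ‖(r n (m n y)).val - (r n (m n z)).val‖
        ≤ (c n)⁻¹ * (K * (c n * (dist y z + 2 * (δ / c n)))) := by
          refine mul_le_mul_of_nonneg_left (h1.trans ?_) (inv_nonneg.2 (hcn n).le)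
          exact mul_le_mul_of_nonneg_left
            (mul_le_mul_of_nonneg_left h2 (hcn n).le) K.coe_nonneg
      _ = K * dist y z + 2 * K * δ / c n := by field_simp [(hcn n).ne']; try ring
      _ ≤ K * dist y z + C / c n := by
          have hle : 2 * (K:ℝ) * δ ≤ C := by
            rw [hCdef]
            nlinarith [K.coe_nonneg, hb.le, hδ.le]
          gcongr
  -- approximate retraction estimate
  have hret : ∀ (n : ℕ) (x : X), ‖f n (i x) - x‖ ≤ C / c n := by
    intro n x
    set pN : ↥N := q (c n • x) with hpN
    have hqd : dist (c n • x) pN.val < b := hq (c n • x)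
    have key : ‖f n (i x) - x‖ ≤ ‖f n (i x) - (c n)⁻¹ • pN.val‖ + ‖(c n)⁻¹ • pN.val - x‖ := by
      have := norm_sub_le_norm_sub_add_norm_sub (f n (i x)) ((c n)⁻¹ • pN.val) x
      exact this
    have hterm2 : ‖(c n)⁻¹ • pN.val - x‖ ≤ b / c n := by
      have hx : x = (c n)⁻¹ • (c n • x) := by
        rw [smul_smul, inv_mul_cancel₀ (hcn n).ne', one_smul]
      calc ‖(c n)⁻¹ • pN.val - x‖ = ‖(c n)⁻¹ • pN.val - (c n)⁻¹ • (c n • x)‖ := by rw [← hx]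
        _ = (c n)⁻¹ * ‖pN.val - c n • x‖ := hsmul n _ _
        _ ≤ (c n)⁻¹ * b := by
            refine mul_le_mul_of_nonneg_left ?_ (inv_nonneg.2 (hcn n).le)
            rw [← dist_eq_norm, dist_comm]
            exact hqd.le
        _ = b / c n := by rw [div_eq_inv_mul]
    have hterm1 : ‖f n (i x) - (c n)⁻¹ • pN.val‖ ≤ (K * (δ + b)) / c n := by
      have hrpN : (r n (e n pN)).val = pN.val := by rw [hre n pN]
      have h1 : ‖f n (i x) - (c n)⁻¹ • pN.val‖
          = (c n)⁻¹ * ‖(r n (m n (i x))).val - (r n (e n pN)).val‖ := by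
        rw [hrpN, hf]
        exact hsmul n _ _
      rw [h1]
      have h2 : ‖(r n (m n (i x))).val - (r n (e n pN)).val‖
          ≤ K * (c n * dist (m n (i x)).val ((e n pN) : ↥(M n)).val) := by
        rw [← dist_eq_norm]; exact hrlip n _ _
      have h3 : dist (m n (i x)).val ((e n pN) : ↥(M n)).val ≤ δ / c n + b / c n := by
        calc dist (m n (i x)).val ((e n pN) : ↥(M n)).val
            ≤ dist (m n (i x)).val (i x) + dist (i x) ((e n pN) : ↥(M n)).val :=
              dist_triangle _ _ _
          _ ≤ δ / c n + b / c n := by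
              have ha1 : dist (m n (i x)).val (i x) ≤ δ / c n := by
                rw [dist_comm]; exact (hm n (i x)).le
              have ha2 : dist (i x) ((e n pN) : ↥(M n)).val ≤ b / c n := by
                show dist (i x) (i ((c n)⁻¹ • pN.val)) ≤ b / c n
                rw [hi.dist_eq]
                have hx : x = (c n)⁻¹ • (c n • x) := by
                  rw [smul_smul, inv_mul_cancel₀ (hcn n).ne', one_smul]
                calc dist x ((c n)⁻¹ • pN.val)
                    = ‖(c n)⁻¹ • (c n • x) - (c n)⁻¹ • pN.val‖ := by
                      rw [dist_eq_norm, ← hx]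
                  _ = (c n)⁻¹ * ‖c n • x - pN.val‖ := hsmul n _ _
                  _ ≤ (c n)⁻¹ * b := by
                      refine mul_le_mul_of_nonneg_left ?_ (inv_nonneg.2 (hcn n).le)
                      rw [← dist_eq_norm]
                      exact hqd.le
                  _ = b / c n := by rw [div_eq_inv_mul]
              gcongr
      calc (c n)⁻¹ * ‖(r n (m n (i x))).val - (r n (e n pN)).val‖
          ≤ (c n)⁻¹ * (K * (c n * (δ / c n + b / c n))) := by
            refine mul_le_mul_of_nonneg_left (h2.trans ?_) (inv_nonneg.2 (hcn n).le)
            exact mul_le_mul_of_nonneg_left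
              (mul_le_mul_of_nonneg_left h3 (hcn n).le) K.coe_nonneg
        _ = (K * (δ + b)) / c n := by field_simp; try ring
    calc ‖f n (i x) - x‖ ≤ ‖f n (i x) - (c n)⁻¹ • pN.val‖ + ‖(c n)⁻¹ • pN.val - x‖ := key
      _ ≤ (K * (δ + b)) / c n + b / c n := add_le_add hterm1 hterm2
      _ = (K * (δ + b) + b) / c n := by ring
      _ ≤ C / c n := by
          have hle : (K:ℝ) * (δ + b) + b ≤ C := by
            rw [hCdef]
            nlinarith [K.coe_nonneg, hb.le, hδ.le]
          gcongr
  -- uniform bound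
  have hCcn : ∀ n, C / c n ≤ C := fun n => by
    rw [div_le_iff₀ (hcn n)]
    nlinarith [hcn1 n, hC]
  have hbound : ∀ (n : ℕ) (y : Y), ‖f n y‖ ≤ K * dist y (i 0) + 2 * C := by
    intro n y
    calc ‖f n y‖ = ‖(f n y - f n (i 0)) + (f n (i 0) - 0)‖ := by
          congr 1
          abel
      _ ≤ ‖f n y - f n (i 0)‖ + ‖f n (i 0) - 0‖ := norm_add_le _ _
      _ ≤ (K * dist y (i 0) + C / c n) + C / c n := by
          refine add_le_add (hlip n y (i 0)) ?_
          have := hret n 0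
          simpa using this
      _ ≤ K * dist y (i 0) + 2 * C := by
          have := hCcn n
          linarith
  -- ultrafilter limits in the weak-star topology
  set U : Ultrafilter ℕ := Ultrafilter.of Filter.atTop with hUdef
  have hUle : (U : Filter ℕ) ≤ Filter.atTop := Ultrafilter.of_le _
  set J : X →L[ℝ] StrongDual ℝ (StrongDual ℝ X) :=
    NormedSpace.inclusionInDoubleDual ℝ X with hJ
  have hgex : ∀ y : Y, ∃ ψ : WeakDual ℝ (StrongDual ℝ X),
      Filter.Tendsto (fun n => StrongDual.toWeakDual (J (f n y))) U (nhds ψ) := by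
    intro y
    have hcomp := WeakDual.isCompact_closedBall (𝕜 := ℝ)
      (0 : StrongDual ℝ (StrongDual ℝ X)) (K * dist y (i 0) + 2 * C)
    have hmem : ∀ n : ℕ, StrongDual.toWeakDual (J (f n y)) ∈
        (WeakDual.toStrongDual ⁻¹' Metric.closedBall 0 (K * dist y (i 0) + 2 * C)) := by
      intro n
      simp only [Set.mem_preimage, Metric.mem_closedBall, dist_zero_right]
      calc dist (WeakDual.toStrongDual (StrongDual.toWeakDual (J (f n y)))) 0
          = ‖J (f n y)‖ := dist_zero_right (J (f n y))
        _ ≤ ‖f n y‖ := NormedSpace.double_dual_bound ℝ X (f n y)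
        _ ≤ K * dist y (i 0) + 2 * C := hbound n y
    set V : Ultrafilter (WeakDual ℝ (StrongDual ℝ X)) :=
      U.map (fun n => StrongDual.toWeakDual (J (f n y))) with hV
    have hple : (V : Filter (WeakDual ℝ (StrongDual ℝ X)))
        ≤ Filter.principal (WeakDual.toStrongDual ⁻¹'
            Metric.closedBall 0 (K * dist y (i 0) + 2 * C)) := by
      rw [Filter.le_principal_iff, hV, Ultrafilter.coe_map]
      exact Filter.mem_map.2 (Filter.univ_mem' hmem)
    obtain ⟨ψ, _, hψ⟩ := hcomp.ultrafilter_le_nhds _ hple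
    refine ⟨ψ, ?_⟩
    have : Filter.map (fun n => StrongDual.toWeakDual (J (f n y))) U ≤ nhds ψ := by
      rw [← Ultrafilter.coe_map, ← hV]
      exact hψ
    exact this
  choose g hg using hgex
  -- evaluation limits
  have hgev : ∀ (y : Y) (φ : StrongDual ℝ X),
      Filter.Tendsto (fun n => φ (f n y)) U (nhds (g y φ)) := by
    intro y φ
    have hcont := (WeakDual.eval_continuous (𝕜 := ℝ) (E := StrongDual ℝ X) φ)
    exact ((hcont.tendsto (g y)).comp (hg y) : _)
  -- limit of C / c n along U is 0
  have hC0 : Filter.Tendsto (fun n => C / c n) (U : Filter ℕ) (nhds 0) := by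
    refine Filter.Tendsto.mono_left ?_ hUle
    have h1 : Filter.Tendsto c Filter.atTop Filter.atTop := by
      rw [hc]
      exact Filter.tendsto_atTop_add_const_right _ 1 tendsto_natCast_atTop_atTop
    exact Filter.Tendsto.div_atTop tendsto_const_nhds h1
  -- Lipschitz estimate for g
  have hKlip : ∀ y z : Y, ‖WeakDual.toStrongDual (g y) - WeakDual.toStrongDual (g z)‖
      ≤ K * dist y z := by
    intro y z
    refine ContinuousLinearMap.opNorm_le_bound _
      (mul_nonneg K.coe_nonneg dist_nonneg) fun φ => ?_
    have h1 : Filter.Tendsto (fun n => ‖φ (f n y) - φ (f n z)‖) U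
        (nhds ‖g y φ - g z φ‖) := ((hgev y φ).sub (hgev z φ)).norm
    have h2 : Filter.Tendsto (fun n => ‖φ‖ * (K * dist y z + C / c n)) (U : Filter ℕ)
        (nhds (‖φ‖ * (K * dist y z + 0))) :=
      (tendsto_const_nhds.add hC0).const_mul _
    have h3 : ∀ n, ‖φ (f n y) - φ (f n z)‖ ≤ ‖φ‖ * (K * dist y z + C / c n) := by
      intro n
      calc ‖φ (f n y) - φ (f n z)‖ = ‖φ (f n y - f n z)‖ := by rw [map_sub]
        _ ≤ ‖φ‖ * ‖f n y - f n z‖ := φ.le_opNorm _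
        _ ≤ ‖φ‖ * (K * dist y z + C / c n) :=
            mul_le_mul_of_nonneg_left (hlip n y z) (norm_nonneg φ)
    have hfin := le_of_tendsto_of_tendsto' h1 h2 h3
    rw [add_zero] at hfin
    calc ‖(WeakDual.toStrongDual (g y) - WeakDual.toStrongDual (g z)) φ‖
        = ‖g y φ - g z φ‖ := rfl
      _ ≤ ‖φ‖ * (K * dist y z) := hfin
      _ = K * dist y z * ‖φ‖ := by ring
  -- retraction identity for g
  have hgi : ∀ x : X, g (i x) = StrongDual.toWeakDual (J x) := by
    intro x
    have hfx : Filter.Tendsto (fun n => f n (i x)) Filter.atTop (nhds x) := by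
      rw [tendsto_iff_dist_tendsto_zero]
      refine squeeze_zero (g := fun n => C / c n) (fun n => dist_nonneg) (fun n => ?_) ?_
      · rw [dist_eq_norm]; exact hret n x
      · have h1 : Filter.Tendsto c Filter.atTop Filter.atTop := by
          rw [hc]
          exact Filter.tendsto_atTop_add_const_right _ 1 tendsto_natCast_atTop_atTop
        exact Filter.Tendsto.div_atTop tendsto_const_nhds h1
    have hcont : Continuous fun v : X => StrongDual.toWeakDual (J v) :=
      NormedSpace.Dual.toWeakDual_continuous.comp J.continuous
    have h2 : Filter.Tendsto (fun n => StrongDual.toWeakDual (J (f n (i x))))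
        (U : Filter ℕ) (nhds (StrongDual.toWeakDual (J x))) :=
      ((hcont.tendsto x).comp hfx).mono_left hUle
    exact tendsto_nhds_unique (hg (i x)) h2
  -- conclusion
  refine ⟨fun y => ρ (WeakDual.toStrongDual (g y)), ?_, ?_⟩
  · refine LipschitzWith.of_dist_le_mul fun y z => ?_
    have h1 : dist (ρ (WeakDual.toStrongDual (g y))) (ρ (WeakDual.toStrongDual (g z)))
        ≤ K₀ * dist (WeakDual.toStrongDual (g y)) (WeakDual.toStrongDual (g z)) :=
      hρ.dist_le_mul _ _
    have h2 : dist (WeakDual.toStrongDual (g y)) (WeakDual.toStrongDual (g z))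
        ≤ K * dist y z := by
      exact (dist_eq_norm (E := StrongDual ℝ (StrongDual ℝ X)) _ _).le.trans (hKlip y z)
    calc dist (ρ (WeakDual.toStrongDual (g y))) (ρ (WeakDual.toStrongDual (g z)))
        ≤ K₀ * (K * dist y z) := h1.trans (mul_le_mul_of_nonneg_left h2 K₀.coe_nonneg)
      _ = ((K₀ * K : ℝ≥0) : ℝ) * dist y z := by push_cast; ring
  · intro x
    show ρ (WeakDual.toStrongDual (g (i x))) = x
    rw [hgi x]
    exact hρJ x

/-- If a Banach space `X` is an absolute Lipschitz retract then every
net `N` in `X` is an absolute uniformly discrete Lipschitz retract; conversely, if some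
net `N` in `X` is an absolute uniformly discrete Lipschitz retract and `X` is a
Lipschitz retract of `X**`, then `X` is an absolute Lipschitz retract. -/
theorem stmt_11 (X : Type) [NormedAddCommGroup X] [NormedSpace ℝ X] [CompleteSpace X] :
    (IsAbsoluteLipschitzRetract X →
      ∀ N : Set X, IsNet N → ∀ δ : ℝ, 0 < δ →
        (∀ x ∈ N, ∀ y ∈ N, x ≠ y → δ ≤ dist x y) →
        IsAbsUnifDiscLipschitzRetract ↥N δ) ∧
    ((∃ N : Set X, IsNet N ∧ ∃ δ : ℝ, 0 < δ ∧
        (∀ x ∈ N, ∀ y ∈ N, x ≠ y → δ ≤ dist x y) ∧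
        IsAbsUnifDiscLipschitzRetract ↥N δ) →
      (∃ (K : ℝ≥0) (ρ : StrongDual ℝ (StrongDual ℝ X) → X),
        LipschitzWith K ρ ∧ ∀ x : X, ρ (NormedSpace.inclusionInDoubleDual ℝ X x) = x) →
      IsAbsoluteLipschitzRetract X) := by
  constructor
  · exact part1_aux X
  · rintro ⟨N, hNet, δ, hδ, hsep, haudlr⟩ ⟨K₀, ρ, hρ, hρJ⟩
    exact part2_aux X N hNet δ hδ hsep haudlr K₀ ρ hρ hρJ
end

section
/- Let X be a metric space. Suppose there exist a subset M ⊆ X containing a distinguished point, a sequence of distinct points {μ_n}_{n=1}^∞ ⊆ M, and a sequence of retractions φ_n : M → M, n ∈ ℕ, satisfying: (i) φ_n(M) = M_n := {μ_1,…,μ_n} for every n; (ii) the closure in X of ⋃_{j=1}^∞ {μ_j} equals M; (iii) there exists K > 0 such that φ_n is K-Lipschitz for every n; (iv) φ_m ∘ φ_n = φ_n ∘ φ_m = φ_n for all m,n ∈ ℕ with n ≤ m. Then the Lipschitz-free space F(M) has a Schauder basis with basis constant at most K. -/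
open scoped NNReal ENNReal

/-- If a subset `M` of a metric space `X` carries a sequence of
distinct points `μ` and uniformly `K`-Lipschitz commuting retractions `φ n` of `M` onto
`{μ 0, …, μ n}` whose union of images is dense in `M`, then `𝓕(M)` has a Schauder basis
with basis constant at most `K`. -/
theorem stmt_14 (X : Type*) [MetricSpace X] (M : Set X) (b : ↥M)
    (μ : ℕ → ↥M) (hμ : Function.Injective μ)
    (φ : ℕ → (↥M → ↥M))
    (himage : ∀ n : ℕ, Set.range (φ n) = μ '' Set.Iic n)
    (hretr : ∀ n : ℕ, ∀ j ≤ n, φ n (μ j) = μ j)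
    (hdense : closure (Subtype.val '' Set.range μ) = M)
    (K : ℝ≥0) (hK : 0 < K) (hlip : ∀ n : ℕ, LipschitzWith K (φ n))
    (hcomm : ∀ m n : ℕ, n ≤ m → φ m ∘ φ n = φ n ∧ φ n ∘ φ m = φ n)
    (F : Type) [NormedAddCommGroup F] [NormedSpace ℝ F] [CompleteSpace F]
    (δ : ↥M → F) (hF : IsLipFreeSpace ↥M b F δ) :
    ∃ z : ℕ → F, IsSchauderBasis z ∧
      ∀ (y : F) (a : ℕ → ℝ),
        Filter.Tendsto (fun n => ∑ i ∈ Finset.range n, a i • z i) Filter.atTop (nhds y) →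
        ∀ n : ℕ, ‖∑ i ∈ Finset.range n, a i • z i‖ ≤ (K : ℝ) * ‖y‖ := by
  classical
  -- basic facts about δ and the span
  have hdense_span : Dense ((Submodule.span ℝ (Set.range δ) : Submodule ℝ F) : Set F) :=
    Submodule.dense_iff_topologicalClosure_eq_top.mpr hF.dense_span
  have hmem_top : ∀ (p : Submodule ℝ F), IsClosed (p : Set F) →
      (∀ x : ↥M, δ x ∈ p) → ∀ y : F, y ∈ p := by
    intro p hpclosed hδp y
    have h1 : Submodule.span ℝ (Set.range δ) ≤ p :=
      Submodule.span_le.mpr (Set.range_subset_iff.mpr hδp)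
    have h2 := (Submodule.span ℝ (Set.range δ)).topologicalClosure_minimal h1 hpclosed
    rw [hF.dense_span] at h2
    exact h2 Submodule.mem_top
  have hext : ∀ A B : F →L[ℝ] F, (∀ x : ↥M, A (δ x) = B (δ x)) → A = B := by
    intro A B h
    exact ContinuousLinearMap.ext_on hdense_span (by rintro _ ⟨x, rfl⟩; exact h x)
  -- facts about the retractions
  have hφmem : ∀ (n : ℕ) (x : ↥M), ∃ j ≤ n, φ n x = μ j := by
    intro n x
    have hx : φ n x ∈ Set.range (φ n) := ⟨x, rfl⟩
    rw [himage] at hx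
    obtain ⟨j, hj, hjx⟩ := hx
    exact ⟨j, hj, hjx.symm⟩
  have hφidem : ∀ (n : ℕ) (x : ↥M), φ n (φ n x) = φ n x := by
    intro n x
    obtain ⟨j, hj, hjx⟩ := hφmem n x
    rw [hjx, hretr n j hj]
  have hc1 : ∀ {m n : ℕ}, n ≤ m → ∀ u, φ m (φ n u) = φ n u := by
    intro m n h u; exact congrFun (hcomm m n h).1 u
  have hc2 : ∀ {m n : ℕ}, n ≤ m → ∀ u, φ n (φ m u) = φ n u := by
    intro m n h u; exact congrFun (hcomm m n h).2 u
  -- construction of the projections T n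
  have hTex : ∀ n : ℕ, ∃ T : F →L[ℝ] F, ‖T‖ ≤ (K : ℝ) ∧
      ∀ x : ↥M, T (δ x) = δ (φ n x) - δ (φ n b) := by
    intro n
    have h1 : LipschitzWith (1 * K) (fun x => δ (φ n x)) :=
      (hF.isometry.lipschitz).comp (hlip n)
    have hlf : LipschitzWith K (fun x : ↥M => δ (φ n x) - δ (φ n b)) := by
      apply LipschitzWith.of_dist_le_mul
      intro x y
      rw [dist_sub_right]
      simpa using h1.dist_le_mul x y
    exact hF.extend F K _ hlf (by simp)
  choose T hTnorm hTδ using hTex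
  -- semigroup property
  have hTTle : ∀ n m : ℕ, n ≤ m →
      (T n).comp (T m) = T n ∧ (T m).comp (T n) = T n := by
    intro n m hnm
    constructor
    · apply hext; intro x
      simp only [ContinuousLinearMap.comp_apply, hTδ, map_sub, hc2 hnm]
      abel
    · apply hext; intro x
      simp only [ContinuousLinearMap.comp_apply, hTδ, map_sub, hc1 hnm]
      abel
  have hTTle1 : ∀ {n m : ℕ}, n ≤ m → ∀ y, T n (T m y) = T n y := by
    intro n m h y
    exact ContinuousLinearMap.ext_iff.mp (hTTle n m h).1 y
  have hTTle2 : ∀ {n m : ℕ}, n ≤ m → ∀ y, T m (T n y) = T n y := by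
    intro n m h y
    exact ContinuousLinearMap.ext_iff.mp (hTTle n m h).2 y
  -- T 0 = 0
  have hφ0 : ∀ x : ↥M, φ 0 x = μ 0 := by
    intro x
    obtain ⟨j, hj, hjx⟩ := hφmem 0 x
    rwa [Nat.le_zero.mp hj] at hjx
  have hT0 : ∀ y : F, T 0 y = 0 := by
    have h0 : T 0 = 0 := by
      apply hext; intro x
      simp [hTδ, hφ0]
    simp [h0]
  -- pointwise convergence of φ n x to x
  have happrox : ∀ (x : ↥M) (ε : ℝ), 0 < ε → ∃ j : ℕ, dist x (μ j) < ε := by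
    intro x ε hε
    have hx : (x : X) ∈ closure (Subtype.val '' Set.range μ) := by
      rw [hdense]; exact x.2
    rw [Metric.mem_closure_iff] at hx
    obtain ⟨y, hy, hylt⟩ := hx ε hε
    obtain ⟨m, ⟨j, rfl⟩, rfl⟩ := hy
    exact ⟨j, by simpa [Subtype.dist_eq] using hylt⟩
  have hφtend : ∀ x : ↥M, Filter.Tendsto (fun n => φ n x) Filter.atTop (nhds x) := by
    intro x
    rw [Metric.tendsto_atTop]
    intro ε hε
    have hKpos : (0 : ℝ) < (K : ℝ) + 2 := by positivity
    obtain ⟨j, hj⟩ := happrox x (ε / ((K : ℝ) + 2)) (by positivity)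
    refine ⟨j, fun n hn => ?_⟩
    have h1 : dist (φ n x) (φ n (μ j)) ≤ (K : ℝ) * dist x (μ j) := (hlip n).dist_le_mul x (μ j)
    have h2 : φ n (μ j) = μ j := hretr n j hn
    have h1' : dist (φ n x) (μ j) ≤ (K : ℝ) * dist x (μ j) := by
      have e : dist (φ n x) (μ j) = dist (φ n x) (φ n (μ j)) := by rw [h2]
      rw [e]; exact h1
    have hK0 : (0 : ℝ) ≤ (K : ℝ) := K.coe_nonneg
    have hd0 : (0 : ℝ) ≤ dist x (μ j) := dist_nonneg
    calc dist (φ n x) x ≤ dist (φ n x) (μ j) + dist (μ j) x := dist_triangle _ _ _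
      _ ≤ (K : ℝ) * dist x (μ j) + dist x (μ j) := by
          rw [dist_comm (μ j) x]; linarith
      _ = ((K : ℝ) + 1) * dist x (μ j) := by ring
      _ < ((K : ℝ) + 2) * (ε / ((K : ℝ) + 2)) := by nlinarith
      _ = ε := by field_simp
  -- strong convergence of T n to the identity
  have hTtendδ : ∀ x : ↥M, Filter.Tendsto (fun n => T n (δ x)) Filter.atTop (nhds (δ x)) := by
    intro x
    have h1 : Filter.Tendsto (fun n => δ (φ n x)) Filter.atTop (nhds (δ x)) :=
      (hF.isometry.continuous.tendsto x).comp (hφtend x)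
    have h2 : Filter.Tendsto (fun n => δ (φ n b)) Filter.atTop (nhds 0) := by
      have := (hF.isometry.continuous.tendsto b).comp (hφtend b)
      simpa [hF.map_base, Function.comp_def] using this
    have h3 := h1.sub h2
    rw [sub_zero] at h3
    convert h3 using 2 with n
    exact hTδ n x
  have hTtend_span : ∀ y ∈ Submodule.span ℝ (Set.range δ),
      Filter.Tendsto (fun n => T n y) Filter.atTop (nhds y) := by
    intro y hy
    induction hy using Submodule.span_induction with
    | mem x hx => obtain ⟨x, rfl⟩ := hx; exact hTtendδ x
    | zero => simp only [map_zero]; exact tendsto_const_nhds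
    | add u v _ _ hu hv => convert hu.add hv using 2 with n; simp
    | smul a u _ hu => convert hu.const_smul a using 2 with n; simp
  have hTtend : ∀ y : F, Filter.Tendsto (fun n => T n y) Filter.atTop (nhds y) := by
    intro y
    rw [NormedAddCommGroup.tendsto_atTop]
    intro ε hε
    have hK1 : (0 : ℝ) < (K : ℝ) + 1 := by positivity
    obtain ⟨d, hd, hdlt⟩ := hdense_span.exists_dist_lt y (show 0 < ε / (2 * ((K : ℝ) + 1)) by positivity)
    have hdt := hTtend_span d hd
    rw [NormedAddCommGroup.tendsto_atTop] at hdt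
    obtain ⟨N, hN⟩ := hdt (ε / 2) (by positivity)
    refine ⟨N, fun n hn => ?_⟩
    have hyd : ‖y - d‖ < ε / (2 * ((K : ℝ) + 1)) := by
      rw [← dist_eq_norm]; exact hdlt
    have e1 : T n y - y = T n (y - d) + (T n d - d) + (d - y) := by
      rw [map_sub]; abel
    have e2 : ‖T n (y - d)‖ ≤ (K : ℝ) * ‖y - d‖ := by
      calc ‖T n (y - d)‖ ≤ ‖T n‖ * ‖y - d‖ := (T n).le_opNorm _
        _ ≤ (K : ℝ) * ‖y - d‖ := by
            exact mul_le_mul_of_nonneg_right (hTnorm n) (norm_nonneg _)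
    have e3 : ‖d - y‖ = ‖y - d‖ := norm_sub_rev _ _
    calc ‖T n y - y‖ ≤ ‖T n (y - d)‖ + ‖T n d - d‖ + ‖d - y‖ := by
          rw [e1]; exact norm_add₃_le
      _ ≤ (K : ℝ) * ‖y - d‖ + ε / 2 + ‖y - d‖ := by
          have := hN n hn
          rw [e3]; linarith [e2]
      _ = ((K : ℝ) + 1) * ‖y - d‖ + ε / 2 := by ring
      _ < ((K : ℝ) + 1) * (ε / (2 * ((K : ℝ) + 1))) + ε / 2 := by
          have := mul_lt_mul_of_pos_left hyd hK1
          linarith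
      _ = ε := by field_simp; ring
  -- the basis vectors
  set z : ℕ → F := fun n => δ (μ (n + 1)) - δ (φ n (μ (n + 1))) with hzdef
  have hz : ∀ n, z n = δ (μ (n + 1)) - δ (φ n (μ (n + 1))) := fun n => rfl
  have hzne : ∀ n, z n ≠ 0 := by
    intro n h
    obtain ⟨j, hj, hjx⟩ := hφmem n (μ (n + 1))
    have h1 : δ (μ (n + 1)) = δ (φ n (μ (n + 1))) := sub_eq_zero.mp (by rw [← hz n]; exact h)
    rw [hjx] at h1
    have := hμ (hF.isometry.injective h1)
    omega
  have hTzi0 : ∀ i, T i (z i) = 0 := by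
    intro i
    rw [hz, map_sub, hTδ, hTδ, hφidem]
    abel
  have hTzi1 : ∀ i, T (i + 1) (z i) = z i := by
    intro i
    rw [hz, map_sub, hTδ, hTδ, hretr (i + 1) (i + 1) le_rfl, hc1 (Nat.le_succ i)]
    abel
  have hTzlo : ∀ k i, k ≤ i → T k (z i) = 0 := by
    intro k i hk
    have h := hTTle1 hk (z i)
    rw [hTzi0] at h
    rw [← h, map_zero]
  have hTzhi : ∀ k i, i < k → T k (z i) = z i := by
    intro k i hk
    have h := hTTle2 (show i + 1 ≤ k from hk) (z i)
    rw [hTzi1] at h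
    exact h
  -- range of T (n+1) - T n is spanned by z n
  have hQmem : ∀ (n : ℕ) (y : F), T (n + 1) y - T n y ∈ Submodule.span ℝ {z n} := by
    intro n
    have hw : δ (φ n b) - δ (φ (n + 1) b) ∈ Submodule.span ℝ {z n} := by
      obtain ⟨j0, hj0, hb⟩ := hφmem (n + 1) b
      have hφnb : φ n b = φ n (μ j0) := by rw [← hb]; exact (hc2 (Nat.le_succ n) b).symm
      by_cases hcase : j0 ≤ n
      · have h1 : φ n b = μ j0 := by rw [hφnb, hretr n j0 hcase]
        rw [h1, hb]
        simp
      · have hj1 : j0 = n + 1 := by omega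
        subst hj1
        rw [hφnb, hb]
        have h2 : δ (φ n (μ (n + 1))) - δ (μ (n + 1)) = -(z n) := by rw [hz]; abel
        rw [h2]
        exact Submodule.neg_mem _ (Submodule.mem_span_singleton_self _)
    have hQμ : ∀ j ≤ n + 1,
        T (n + 1) (δ (μ j)) - T n (δ (μ j)) ∈ Submodule.span ℝ {z n} := by
      intro j hj
      by_cases hcase : j ≤ n
      · rw [hTδ, hTδ, hretr (n + 1) j (hcase.trans (Nat.le_succ n)), hretr n j hcase]
        have h1 : δ (μ j) - δ (φ (n + 1) b) - (δ (μ j) - δ (φ n b))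
            = δ (φ n b) - δ (φ (n + 1) b) := by abel
        rw [h1]; exact hw
      · have hj1 : j = n + 1 := by omega
        subst hj1
        rw [hTδ, hTδ, hretr (n + 1) (n + 1) le_rfl]
        have h1 : δ (μ (n + 1)) - δ (φ (n + 1) b) - (δ (φ n (μ (n + 1))) - δ (φ n b))
            = z n + (δ (φ n b) - δ (φ (n + 1) b)) := by rw [hz]; abel
        rw [h1]
        exact Submodule.add_mem _ (Submodule.mem_span_singleton_self _) hw
    have hkey : ∀ x : ↥M, T (n + 1) (δ x) - T n (δ x)
        = (T (n + 1) (δ (φ (n + 1) x)) - T n (δ (φ (n + 1) x)))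
          - (T (n + 1) (δ (φ (n + 1) b)) - T n (δ (φ (n + 1) b))) := by
      intro u
      simp only [hTδ, hφidem, hc2 (Nat.le_succ n)]
      abel
    have hδmem : ∀ x : ↥M, T (n + 1) (δ x) - T n (δ x) ∈ Submodule.span ℝ {z n} := by
      intro x
      obtain ⟨j, hj, hju⟩ := hφmem (n + 1) x
      obtain ⟨j', hj', hjb⟩ := hφmem (n + 1) b
      rw [hkey x, hju, hjb]
      exact Submodule.sub_mem _ (hQμ j hj) (hQμ j' hj')
    -- extend to all of F by density
    have hclosed : IsClosed ((Submodule.comap ((T (n + 1) - T n) : F →L[ℝ] F).toLinearMap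
        (Submodule.span ℝ {z n}) : Submodule ℝ F) : Set F) := by
      have hc : IsClosed ((Submodule.span ℝ {z n} : Submodule ℝ F) : Set F) :=
        Submodule.closed_of_finiteDimensional _
      exact hc.preimage (T (n + 1) - T n).continuous
    have := hmem_top _ hclosed (by
      intro x
      simp only [Submodule.mem_comap, ContinuousLinearMap.coe_coe,
        ContinuousLinearMap.sub_apply]
      exact hδmem x)
    intro y
    have hy := this y
    simp only [Submodule.mem_comap, ContinuousLinearMap.coe_coe,
      ContinuousLinearMap.sub_apply] at hy
    exact hy
  -- coefficients
  have hcoef : ∀ y : F, ∃ a : ℕ → ℝ, ∀ n, a n • z n = T (n + 1) y - T n y := by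
    intro y
    choose a ha using fun n => Submodule.mem_span_singleton.mp (hQmem n y)
    exact ⟨a, ha⟩
  have hsum : ∀ (y : F) (a : ℕ → ℝ), (∀ n, a n • z n = T (n + 1) y - T n y) →
      ∀ n, ∑ i ∈ Finset.range n, a i • z i = T n y := by
    intro y a ha n
    have h1 : ∑ i ∈ Finset.range n, a i • z i
        = ∑ i ∈ Finset.range n, (T (i + 1) y - T i y) :=
      Finset.sum_congr rfl fun i _ => ha i
    rw [h1, Finset.sum_range_sub (fun i => T i y), hT0, sub_zero]
  -- coefficients are determined by the limit
  have huniq : ∀ (y : F) (a : ℕ → ℝ),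
      Filter.Tendsto (fun n => ∑ i ∈ Finset.range n, a i • z i) Filter.atTop (nhds y) →
      ∀ j, a j • z j = T (j + 1) y - T j y := by
    intro y a ha j
    have hQcont : Continuous fun u : F => T (j + 1) u - T j u :=
      ((T (j + 1)).continuous).sub ((T j).continuous)
    have h1 : Filter.Tendsto
        (fun n => T (j + 1) (∑ i ∈ Finset.range n, a i • z i)
          - T j (∑ i ∈ Finset.range n, a i • z i))
        Filter.atTop (nhds (T (j + 1) y - T j y)) :=
      (hQcont.tendsto y).comp ha
    have h2 : ∀ n, j < n →
        T (j + 1) (∑ i ∈ Finset.range n, a i • z i)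
          - T j (∑ i ∈ Finset.range n, a i • z i) = a j • z j := by
      intro n hn
      rw [map_sum, map_sum, ← Finset.sum_sub_distrib]
      have hterm : ∀ i ∈ Finset.range n,
          T (j + 1) (a i • z i) - T j (a i • z i)
            = if i = j then a j • z j else 0 := by
        intro i _
        rcases lt_trichotomy i j with h | h | h
        · rw [map_smul, map_smul, hTzhi (j + 1) i (by omega), hTzhi j i h,
            if_neg (by omega)]
          simp
        · subst h
          rw [map_smul, map_smul, hTzhi (i + 1) i (by omega), hTzlo i i le_rfl,
            if_pos rfl]
          simp
        · rw [map_smul, map_smul, hTzlo (j + 1) i (by omega), hTzlo j i (by omega),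
            if_neg (by omega)]
          simp
      rw [Finset.sum_congr rfl hterm, Finset.sum_ite_eq' (Finset.range n) j
        (fun _ => a j • z j)]
      rw [if_pos (Finset.mem_range.mpr hn)]
    have h3 : Filter.Tendsto (fun _ : ℕ => a j • z j) Filter.atTop
        (nhds (T (j + 1) y - T j y)) := by
      apply h1.congr'
      filter_upwards [Filter.eventually_gt_atTop j] with n hn
      exact h2 n hn
    exact tendsto_nhds_unique tendsto_const_nhds h3
  -- conclusion
  refine ⟨z, ?_, ?_⟩
  · intro y
    obtain ⟨a, ha⟩ := hcoef y
    refine ⟨a, ?_, ?_⟩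
    · show Filter.Tendsto (fun n => ∑ i ∈ Finset.range n, a i • z i) Filter.atTop (nhds y)
      have h1 : (fun n => ∑ i ∈ Finset.range n, a i • z i) = fun n => T n y :=
        funext (hsum y a ha)
      rw [h1]
      exact hTtend y
    · intro a' ha'
      funext j
      have h1 := huniq y a' ha' j
      have h2 := ha j
      have h3 : a' j • z j = a j • z j := by rw [h1, ← h2]
      exact smul_left_injective ℝ (hzne j) h3
  · intro y a ha n
    have h1 : ∀ j, a j • z j = T (j + 1) y - T j y := huniq y a ha
    rw [hsum y a h1 n]
    calc ‖T n y‖ ≤ ‖T n‖ * ‖y‖ := (T n).le_opNorm y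
      _ ≤ (K : ℝ) * ‖y‖ := mul_le_mul_of_nonneg_right (hTnorm n) (norm_nonneg _)
end
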